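/- arXiv:2006.13218 — 4 statements merged into one kernel-verified Lean document; each statement's English description precedes it below -/
import Mathlib

section
/- In a snake graph G = (G_1, ..., G_d) in which the three consecutive tiles (G_{k-1}, G_k, G_{k+1}) form a zig-zag with East(G_k) and South(G_k) being boundary edges (i.e., G_{k+1} lies on top of G_k and G_k lies to the right of G_{k-1}), every perfect matching of G contains exactly one of the two edges East(G_k) and South(G_k). -/
/- ## Snake graphs on the integer lattice -/

abbrev Vtx : Type := ℤ × ℤ
abbrev Edge : Type := Sym2 Vtx

/-- One gluing move: `true` = new tile to the right, `false` = new tile on top. -/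
def mv (p : Vtx) (m : Bool) : Vtx := if m then (p.1 + 1, p.2) else (p.1, p.2 + 1)

/-- Positions (south-west corners) of the tiles of the snake graph with move list `ms`;
the snake graph has `ms.length + 1` tiles, the first at `(0,0)`. -/
def positions (ms : List Bool) : List Vtx := ms.scanl mv (0, 0)

def tilePos (ms : List Bool) (t : ℕ) : Vtx := (positions ms).getD t (0, 0)

def tileVerts (p : Vtx) : Finset Vtx :=
  {p, (p.1 + 1, p.2), (p.1, p.2 + 1), (p.1 + 1, p.2 + 1)}

def eS (p : Vtx) : Edge := s(p, (p.1 + 1, p.2))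
def eW (p : Vtx) : Edge := s(p, (p.1, p.2 + 1))
def eN (p : Vtx) : Edge := s((p.1, p.2 + 1), (p.1 + 1, p.2 + 1))
def eE (p : Vtx) : Edge := s((p.1 + 1, p.2), (p.1 + 1, p.2 + 1))

def tileEdges (p : Vtx) : Finset Edge := {eS p, eW p, eN p, eE p}

def snakeVerts (ms : List Bool) : Finset Vtx := (positions ms).toFinset.biUnion tileVerts
def snakeEdges (ms : List Bool) : Finset Edge := (positions ms).toFinset.biUnion tileEdges

/-- A perfect matching of the snake graph: a set of edges covering every vertex exactly once. -/
def IsPerfectMatching (ms : List Bool) (P : Finset Edge) : Prop :=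
  P ⊆ snakeEdges ms ∧ ∀ v ∈ snakeVerts ms, ∃! e, e ∈ P ∧ v ∈ e

/-- Same, for a possibly infinite set of edges. -/
def IsPerfectMatchingSet (ms : List Bool) (P : Set Edge) : Prop :=
  P ⊆ ↑(snakeEdges ms) ∧ ∀ v ∈ snakeVerts ms, ∃! e, e ∈ P ∧ v ∈ e

/-- A boundary edge: an edge belonging to exactly one tile. -/
def IsBoundaryEdge (ms : List Bool) (e : Edge) : Prop :=
  ((positions ms).toFinset.filter (fun p => e ∈ tileEdges p)).card = 1

/-- Two boundary edges lie in the same parity class iff they are joined by an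
even-length walk along the boundary (consecutive boundary edges share a vertex). -/
def SameParity (ms : List Bool) (e f : Edge) : Prop :=
  Relation.ReflTransGen
    (fun a b => ∃ c,
      (a ≠ c ∧ IsBoundaryEdge ms a ∧ IsBoundaryEdge ms c ∧ ∃ v, v ∈ a ∧ v ∈ c) ∧
      (c ≠ b ∧ IsBoundaryEdge ms c ∧ IsBoundaryEdge ms b ∧ ∃ v, v ∈ c ∧ v ∈ b)) e f

/- ## The orientation of diagonals induced by a perfect matching -/

def NWv (p : Vtx) : Vtx := (p.1, p.2 + 1)
def SEv (p : Vtx) : Vtx := (p.1 + 1, p.2)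
def NEv (p : Vtx) : Vtx := (p.1 + 1, p.2 + 1)

/-- Entry point of the alternating walk on the diagonal of tile `t`
(`o t = true` means the diagonal is oriented "down", i.e. from NW to SE). -/
def diagIn (ms : List Bool) (o : ℕ → Bool) (t : ℕ) : Vtx :=
  if o t then NWv (tilePos ms t) else SEv (tilePos ms t)

def diagOut (ms : List Bool) (o : ℕ → Bool) (t : ℕ) : Vtx :=
  if o t then SEv (tilePos ms t) else NWv (tilePos ms t)

/-- The list of matched edges traversed by the alternating walk from the SW vertex of the
first tile to the NE vertex of the last tile, given the diagonal orientations `o`. -/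
def walkEdgeList (ms : List Bool) (o : ℕ → Bool) : List Edge :=
  s(((0, 0) : Vtx), diagIn ms o 0) ::
    ((List.range ms.length).map fun t => s(diagOut ms o t, diagIn ms o (t + 1))) ++
      [s(diagOut ms o ms.length, NEv (tilePos ms ms.length))]

/-- `o` is the orientation of the diagonals induced by the perfect matching `P`:
the alternating walk uses each matched edge exactly once, and its matched edges are
exactly the edges of `P`. -/
def IsInducedOrientation (ms : List Bool) (P : Finset Edge) (o : ℕ → Bool) : Prop :=
  (walkEdgeList ms o).Nodup ∧ P = (walkEdgeList ms o).toFinset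

/-- The set of (0-indexed) tiles whose diagonal is positive: "down" and relative
orientation `+1` (equivalently even index), or "up" and odd index. -/
def heightSet (ms : List Bool) (o : ℕ → Bool) : Set ℕ :=
  {t | t ≤ ms.length ∧ (o t = true ↔ Even t)}

def HeightOf (ms : List Bool) (P : Finset Edge) (I : Set ℕ) : Prop :=
  ∃ o, IsInducedOrientation ms P o ∧ I = heightSet ms o

/- ## The quiver of a snake graph (0-indexed tiles) -/

/-- Arrow relation of the quiver `Q_G` (0-indexed: tile `i` here is tile `i+1` of the paper). -/
def quiverRel (ms : List Bool) (i j : ℕ) : Prop :=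
  (j = i + 1 ∧ i < ms.length ∧ (ms.getD i true = true ↔ Even i)) ∨
  (i = j + 1 ∧ j < ms.length ∧ ¬(ms.getD j true = true ↔ Even j))

def leQ (ms : List Bool) (i j : ℕ) : Prop :=
  i = j ∨ Relation.TransGen (quiverRel ms) i j

/-- Order ideals (downward closed subsets) of the poset of `Q_G`. -/
def IsOrderIdealQ (ms : List Bool) (I : Set ℕ) : Prop :=
  I ⊆ {t | t ≤ ms.length} ∧ ∀ x ∈ I, ∀ y, leQ ms y x → y ∈ I

/-- `P'` is obtained from `P` by a positive twist at tile `t` (0-indexed; paper's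
`j = t+1`, so paper's "`j` odd" is "`t` even"). -/
def PositiveTwist (ms : List Bool) (P P' : Finset Edge) (t : ℕ) : Prop :=
  t ≤ ms.length ∧
    ((Even t ∧ eN (tilePos ms t) ∈ P ∧ eS (tilePos ms t) ∈ P ∧
        P' = insert (eW (tilePos ms t)) (insert (eE (tilePos ms t))
          ((P.erase (eN (tilePos ms t))).erase (eS (tilePos ms t))))) ∨
      (¬Even t ∧ eW (tilePos ms t) ∈ P ∧ eE (tilePos ms t) ∈ P ∧
        P' = insert (eN (tilePos ms t)) (insert (eS (tilePos ms t))
          ((P.erase (eW (tilePos ms t))).erase (eE (tilePos ms t))))))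

/- ## Loop graphs -/

/-- The non-SW vertex of the boundary edge `c'` of tile `k` used for the loop at the first
tile (`c'` is the South or West edge of tile `k`, whichever is a boundary edge). -/
def startX' (ms : List Bool) (k : ℕ) : Vtx :=
  if ms.getD (k - 1) true then SEv (tilePos ms k) else NWv (tilePos ms k)

/-- The non-SW vertex of the chosen cut edge `c ∈ {S(G₁), W(G₁)}` (`b = true` means `c = S(G₁)`). -/
def startY (b : Bool) : Vtx := if b then (1, 0) else (0, 1)

/-- The identification map for a loop at the first tile, glued to tile `k`:
`x = (0,0) ↦ x'` and `y ↦ y' = tilePos ms k`. -/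
def startGlue (ms : List Bool) (k : ℕ) (b : Bool) : Vtx → Vtx := fun v =>
  if v = (0, 0) then startX' ms k else if v = startY b then tilePos ms k else v

def endX (ms : List Bool) : Vtx := NEv (tilePos ms ms.length)

/-- The non-NE vertex of the chosen cut edge `c ∈ {N(G_d), E(G_d)}` (`b = true` means `c = N(G_d)`). -/
def endY (ms : List Bool) (b : Bool) : Vtx :=
  if b then NWv (tilePos ms ms.length) else SEv (tilePos ms ms.length)

def endX' (ms : List Bool) (k : ℕ) : Vtx :=
  if ms.getD k true then NWv (tilePos ms k) else SEv (tilePos ms k)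

/-- The identification map for a loop at the last tile, glued to tile `k`. -/
def endGlue (ms : List Bool) (k : ℕ) (b : Bool) : Vtx → Vtx := fun v =>
  if v = endX ms then endX' ms k else if v = endY ms b then NEv (tilePos ms k) else v

/-- The quotient map of a loop graph with optional loops at each end,
each given by the index of the tile it is glued to and the choice of cut edge. -/
def loopMap (ms : List Bool) (L1 L2 : Option (ℕ × Bool)) : Vtx → Vtx :=
  (Option.elim L2 id fun kb => endGlue ms kb.1 kb.2) ∘
    (Option.elim L1 id fun kb => startGlue ms kb.1 kb.2)

def loopEdges (ms : List Bool) (q : Vtx → Vtx) : Finset Edge :=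
  (snakeEdges ms).image (Sym2.map q)

def loopVerts (ms : List Bool) (q : Vtx → Vtx) : Finset Vtx := (snakeVerts ms).image q

/-- A perfect matching of the loop graph with quotient map `q`. -/
def IsLoopPM (ms : List Bool) (q : Vtx → Vtx) (P : Finset Edge) : Prop :=
  P ⊆ loopEdges ms q ∧ ∀ v ∈ loopVerts ms q, ∃! e, e ∈ P ∧ v ∈ e

/-- `Q` is a perfect matching of the underlying snake graph extending
the matching `P` of the loop graph. -/
def ExtendsTo (ms : List Bool) (q : Vtx → Vtx) (Q P : Finset Edge) : Prop :=
  IsPerfectMatching ms Q ∧ Q.image (Sym2.map q) = P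

/-- A good matching: a perfect matching of the loop graph extendable to the snake graph. -/
def IsGoodMatching (ms : List Bool) (q : Vtx → Vtx) (P : Finset Edge) : Prop :=
  IsLoopPM ms q P ∧ ∃ Q, ExtendsTo ms q Q P

/-- The vertex `v` is matched in `P` by (the image of) a snake-graph edge at `v`
other than the cut-side edge `c`. -/
def SideMatched (ms : List Bool) (q : Vtx → Vtx) (P : Finset Edge) (v : Vtx) (c : Edge) : Prop :=
  ∃ e₀ ∈ snakeEdges ms, e₀ ≠ c ∧ v ∈ e₀ ∧ Sym2.map q e₀ ∈ P

/-- The height of a good matching of a loop graph, via an extension to the snake graph. -/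
def LoopHeightOf (ms : List Bool) (q : Vtx → Vtx) (P : Finset Edge) (I : Set ℕ) : Prop :=
  ∃ Q, ExtendsTo ms q Q P ∧ HeightOf ms Q I

/-- A perfect matching of an abstract simple graph, as a set of edges. -/
def IsPMSet {W : Type*} (G : SimpleGraph W) (P : Set (Sym2 W)) : Prop :=
  P ⊆ G.edgeSet ∧ ∀ v : W, ∃! e, e ∈ P ∧ v ∈ e
lemma scanl_getD_zero (ms : List Bool) (p : Vtx) :
    (ms.scanl mv p).getD 0 (0,0) = p := by
  cases ms <;> simp [List.scanl]

lemma scanl_getD_succ : ∀ (ms : List Bool) (p : Vtx) (i : ℕ), i < ms.length →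
    (ms.scanl mv p).getD (i+1) (0,0) =
      mv ((ms.scanl mv p).getD i (0,0)) (ms.getD i true)
  | [], _, _, h => by simp at h
  | m :: ms, p, 0, _ => by simp [List.scanl_cons, scanl_getD_zero]
  | m :: ms, p, i+1, h => by
      simp only [List.scanl_cons, List.getD_cons_succ]
      exact scanl_getD_succ ms (mv p m) i (by simpa using h)

lemma tilePos_zero (ms : List Bool) : tilePos ms 0 = (0,0) :=
  scanl_getD_zero ms _

lemma tilePos_succ (ms : List Bool) {i : ℕ} (h : i < ms.length) :
    tilePos ms (i+1) = mv (tilePos ms i) (ms.getD i true) :=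
  scanl_getD_succ ms _ i h

lemma tilePos_sum (ms : List Bool) : ∀ i, i ≤ ms.length →
    (tilePos ms i).1 + (tilePos ms i).2 = i
  | 0, _ => by simp [tilePos_zero]
  | i+1, h => by
      have hi : i < ms.length := h
      have := tilePos_sum ms i (le_of_lt hi)
      rw [tilePos_succ ms hi]
      cases ms.getD i true <;> simp [mv] <;> omega

lemma mem_positions (ms : List Bool) {q : Vtx} (hq : q ∈ positions ms) :
    ∃ i ≤ ms.length, tilePos ms i = q := by
  obtain ⟨n, rfl⟩ := List.mem_iff_get.mp hq
  refine ⟨n, ?_, ?_⟩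
  · have := n.isLt
    simp [positions, List.length_scanl] at this
    omega
  · simp [tilePos, List.getD_eq_getElem _ _ n.isLt]

lemma tilePos_mem (ms : List Bool) {i : ℕ} (h : i ≤ ms.length) :
    tilePos ms i ∈ positions ms := by
  have hi : i < (positions ms).length := by
    simp [positions, List.length_scanl]; omega
  rw [tilePos, List.getD_eq_getElem _ _ hi]
  exact List.getElem_mem hi

/-- if tiles `(G_{k-1}, G_k, G_{k+1})` form a zig-zag with `G_k` to the right
of `G_{k-1}` and `G_{k+1}` on top of `G_k` (so `E(G_k)` and `S(G_k)` are boundary edges),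
then every perfect matching contains exactly one of `E(G_k)`, `S(G_k)`.
(Tile `t` here is the paper's tile `k = t + 1`, 0-indexed.) -/
theorem statement8 (ms : List Bool) (t : ℕ) (h1 : 1 ≤ t) (h2 : t < ms.length)
    (hr : ms.getD (t - 1) false = true) (hu : ms.getD t true = false)
    (P : Finset Edge) (hP : IsPerfectMatching ms P) :
    Xor' (eE (tilePos ms t) ∈ P) (eS (tilePos ms t) ∈ P) := by
  obtain ⟨hsub, hcov⟩ := hP
  set p := tilePos ms t with hp
  set v : Vtx := (p.1 + 1, p.2) with hv
  have hlt1 : t - 1 < ms.length := by omega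
  have hr' : ms.getD (t-1) true = true := by
    rw [List.getD_eq_getElem _ _ hlt1] at hr ⊢; exact hr
  have hsum : p.1 + p.2 = (t : ℤ) := tilePos_sum ms t (le_of_lt h2)
  have hprev : tilePos ms (t-1) = (p.1 - 1, p.2) := by
    have h := tilePos_succ ms hlt1
    rw [hr'] at h
    have ht : t - 1 + 1 = t := by omega
    rw [ht, ← hp] at h
    simp [mv] at h
    rw [Prod.ext_iff] at h ⊢
    constructor
    · have h1' := h.1; omega
    · exact h.2.symm
  have hnext : tilePos ms (t+1) = (p.1, p.2 + 1) := by
    have h := tilePos_succ ms h2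
    rw [hu, ← hp] at h
    simpa [mv] using h
  -- classification of snake edges containing v
  have key : ∀ e ∈ snakeEdges ms, v ∈ e → e = eS p ∨ e = eE p := by
    intro e he hve
    rw [snakeEdges, Finset.mem_biUnion] at he
    obtain ⟨q, hq, heq⟩ := he
    rw [List.mem_toFinset] at hq
    obtain ⟨s, hs, rfl⟩ := mem_positions ms hq
    have hqsum : (tilePos ms s).1 + (tilePos ms s).2 = (s : ℤ) := tilePos_sum ms s hs
    simp only [tileEdges, Finset.mem_insert, Finset.mem_singleton] at heq
    have hcontra1 : ¬ (v = tilePos ms s) := by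
      intro hveq
      have hs' : s = t + 1 := by
        rw [← hveq] at hqsum
        simp [hv] at hqsum
        omega
      rw [hs', hnext] at hveq
      rw [Prod.ext_iff] at hveq
      have := hveq.1; simp [hv] at this
    have hcontra2 : ¬ ((tilePos ms s).1 = p.1 + 1 ∧ (tilePos ms s).2 = p.2 - 1) := by
      rintro ⟨hx, hy⟩
      have hs' : s = t := by rw [hx, hy] at hqsum; omega
      rw [hs', ← hp] at hx; omega
    have hcontra3 : ¬ ((tilePos ms s).1 = p.1 ∧ (tilePos ms s).2 = p.2 - 1) := by
      rintro ⟨hx, hy⟩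
      have hs' : s = t - 1 := by rw [hx, hy] at hqsum; omega
      rw [hs', hprev] at hx; omega
    rcases heq with rfl | rfl | rfl | rfl
    · -- eS
      rw [eS, Sym2.mem_iff] at hve
      rcases hve with h' | h'
      · exact absurd h' hcontra1
      · left
        have : tilePos ms s = p := by
          rw [Prod.ext_iff] at h' ⊢
          simp [hv] at h'; omega
        rw [this]
    · -- eW
      rw [eW, Sym2.mem_iff] at hve
      rcases hve with h' | h'
      · exact absurd h' hcontra1
      · exfalso; apply hcontra2
        rw [Prod.ext_iff] at h'; simp [hv] at h'; omega
    · -- eN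
      rw [eN, Sym2.mem_iff] at hve
      rcases hve with h' | h'
      · exfalso; apply hcontra2
        rw [Prod.ext_iff] at h'; simp [hv] at h'; omega
      · exfalso; apply hcontra3
        rw [Prod.ext_iff] at h'; simp [hv] at h'; omega
    · -- eE
      rw [eE, Sym2.mem_iff] at hve
      rcases hve with h' | h'
      · right
        have : tilePos ms s = p := by
          rw [Prod.ext_iff] at h' ⊢
          simp [hv] at h'; omega
        rw [this]
      · exfalso; apply hcontra3
        rw [Prod.ext_iff] at h'; simp [hv] at h'; omega
  have hvmem : v ∈ snakeVerts ms := by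
    rw [snakeVerts, Finset.mem_biUnion]
    exact ⟨p, List.mem_toFinset.mpr (tilePos_mem ms (le_of_lt h2)),
      by simp [tileVerts, hv]⟩
  obtain ⟨e, ⟨heP, hvE⟩, huniq⟩ := hcov v hvmem
  have hvS : v ∈ eS p := by rw [eS, Sym2.mem_iff]; right; rfl
  have hvEe : v ∈ eE p := by rw [eE, Sym2.mem_iff]; left; rfl
  have hne : eS p ≠ eE p := by
    rw [eS, eE]
    intro h'
    rw [Sym2.eq_iff] at h'
    rcases h' with ⟨h1', -⟩ | ⟨h1', -⟩ <;> rw [Prod.ext_iff] at h1' <;> omega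
  rcases key e (hsub heP) hvE with rfl | rfl
  · right
    refine ⟨heP, fun hE => hne ?_⟩
    exact (huniq (eE p) ⟨hE, hvEe⟩).symm
  · left
    refine ⟨heP, fun hS => hne ?_⟩
    exact huniq (eS p) ⟨hS, hvS⟩
end

section
/- For any snake graph G = (G_1, ..., G_d), the map sending a perfect matching P to its height h(P) is a bijection between the set of perfect matchings of G and the set of order ideals of the poset determined by the quiver Q_G; moreover this bijection carries the covering relation 'P' is obtained from P by a positive twist at tile G_j' to the relation 'h(P') = h(P) ∪ {j} with j not in h(P)'. -/
namespace S12

def vsum (v : Vtx) : ℤ := v.1 + v.2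

lemma vsum_mv (p : Vtx) (m : Bool) : vsum (mv p m) = vsum p + 1 := by
  cases m <;> simp [mv, vsum] <;> ring

lemma scanl_getD_zero (l : List Bool) (b d : Vtx) : (l.scanl mv b).getD 0 d = b := by
  cases l <;> simp [List.scanl]

lemma scanl_getD_succ (l : List Bool) (b d : Vtx) (t : ℕ) (ht : t < l.length) :
    (l.scanl mv b).getD (t+1) d = mv ((l.scanl mv b).getD t d) (l.getD t true) := by
  induction l generalizing b t with
  | nil => simp at ht
  | cons a l ih =>
    cases t with
    | zero => simp [List.scanl_cons, scanl_getD_zero]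
    | succ t =>
      simp only [List.scanl_cons, List.getD_cons_succ]
      exact ih (mv b a) t (by simpa using ht)

lemma tilePos_zero (ms : List Bool) : tilePos ms 0 = (0,0) := by
  simp [tilePos, positions, scanl_getD_zero]

lemma tilePos_succ (ms : List Bool) (t : ℕ) (ht : t < ms.length) :
    tilePos ms (t+1) = mv (tilePos ms t) (ms.getD t true) :=
  scanl_getD_succ ms (0,0) (0,0) t ht

lemma vsum_tilePos (ms : List Bool) (t : ℕ) (ht : t ≤ ms.length) :
    vsum (tilePos ms t) = t := by
  induction t with
  | zero => simp [tilePos_zero, vsum]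
  | succ t ih =>
    rw [tilePos_succ ms t (by omega), vsum_mv, ih (by omega)]
    push_cast; ring

lemma mem_positions_iff (ms : List Bool) (p : Vtx) :
    p ∈ positions ms ↔ ∃ t ≤ ms.length, tilePos ms t = p := by
  have hlen : (positions ms).length = ms.length + 1 := by
    simp only [positions]; exact List.length_scanl
  constructor
  · intro hp
    obtain ⟨t, ht, he⟩ := List.mem_iff_getElem.1 hp
    refine ⟨t, by omega, ?_⟩
    simp [tilePos, List.getD_eq_getElem?_getD, List.getElem?_eq_getElem ht, he]
  · rintro ⟨t, ht, rfl⟩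
    have ht' : t < (positions ms).length := by omega
    have : tilePos ms t = (positions ms)[t] := by
      simp [tilePos, List.getD_eq_getElem?_getD, List.getElem?_eq_getElem ht']
    rw [this]; exact List.getElem_mem _


lemma vsum_NWv (p : Vtx) : vsum (NWv p) = vsum p + 1 := by simp [vsum, NWv]; ring
lemma vsum_SEv (p : Vtx) : vsum (SEv p) = vsum p + 1 := by simp [vsum, SEv]; ring
lemma vsum_NEv (p : Vtx) : vsum (NEv p) = vsum p + 2 := by simp [vsum, NEv]; ring

lemma NWv_ne_SEv (p : Vtx) : NWv p ≠ SEv p := by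
  simp only [NWv, SEv, ne_eq, Prod.mk.injEq, not_and]
  intro h; omega

lemma tilePos_succ' (ms : List Bool) (t : ℕ) (ht : t < ms.length) :
    tilePos ms (t+1) = if ms.getD t true then SEv (tilePos ms t) else NWv (tilePos ms t) := by
  rw [tilePos_succ ms t ht]; cases h : ms.getD t true <;> simp [mv, NWv, SEv]

lemma NEv_eq (ms : List Bool) (t : ℕ) (ht : t < ms.length) :
    NEv (tilePos ms t) =
      if ms.getD t true then NWv (tilePos ms (t+1)) else SEv (tilePos ms (t+1)) := by
  rw [tilePos_succ' ms t ht]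
  cases h : ms.getD t true <;> simp [NEv, NWv, SEv]

lemma mem_tileVerts (v p : Vtx) :
    v ∈ tileVerts p ↔ v = p ∨ v = SEv p ∨ v = NWv p ∨ v = NEv p := by
  simp [tileVerts, SEv, NWv, NEv]

lemma mem_snakeVerts_iff (ms : List Bool) (v : Vtx) :
    v ∈ snakeVerts ms ↔ v = (0,0) ∨ v = NEv (tilePos ms ms.length) ∨
      ∃ t ≤ ms.length, v = NWv (tilePos ms t) ∨ v = SEv (tilePos ms t) := by
  have hmem : v ∈ snakeVerts ms ↔ ∃ t ≤ ms.length, v ∈ tileVerts (tilePos ms t) := by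
    simp only [snakeVerts, Finset.mem_biUnion, List.mem_toFinset]
    constructor
    · rintro ⟨p, hp, hv⟩
      obtain ⟨t, ht, rfl⟩ := (mem_positions_iff ms p).1 hp
      exact ⟨t, ht, hv⟩
    · rintro ⟨t, ht, hv⟩
      exact ⟨_, (mem_positions_iff ms _).2 ⟨t, ht, rfl⟩, hv⟩
  rw [hmem]
  constructor
  · rintro ⟨t, ht, hv⟩
    rw [mem_tileVerts] at hv
    rcases hv with rfl | rfl | rfl | rfl
    · cases t with
      | zero => left; exact tilePos_zero ms
      | succ s =>
        right; right
        refine ⟨s, by omega, ?_⟩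
        rw [tilePos_succ' ms s (by omega)]
        cases h : ms.getD s true <;> simp
    · exact Or.inr (Or.inr ⟨t, ht, Or.inr rfl⟩)
    · exact Or.inr (Or.inr ⟨t, ht, Or.inl rfl⟩)
    · rcases eq_or_lt_of_le ht with rfl | ht'
      · exact Or.inr (Or.inl rfl)
      · right; right
        refine ⟨t+1, by omega, ?_⟩
        rw [NEv_eq ms t ht']
        cases h : ms.getD t true <;> simp
  · rintro (rfl | rfl | ⟨t, ht, rfl | rfl⟩)
    · exact ⟨0, by omega, by rw [mem_tileVerts, tilePos_zero]; tauto⟩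
    · exact ⟨ms.length, le_rfl, by rw [mem_tileVerts]; tauto⟩
    · exact ⟨t, ht, by rw [mem_tileVerts]; tauto⟩
    · exact ⟨t, ht, by rw [mem_tileVerts]; tauto⟩

lemma vsum_classify (ms : List Bool) (v : Vtx) (hv : v ∈ snakeVerts ms) :
    (v = (0,0) ∧ vsum v = 0) ∨
    (v = NEv (tilePos ms ms.length) ∧ vsum v = (ms.length : ℤ) + 2) ∨
    (∃ t ≤ ms.length, vsum v = (t : ℤ) + 1 ∧
      (v = NWv (tilePos ms t) ∨ v = SEv (tilePos ms t))) := by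
  rcases (mem_snakeVerts_iff ms v).1 hv with rfl | rfl | ⟨t, ht, h⟩
  · left; exact ⟨rfl, by simp [vsum]⟩
  · right; left
    refine ⟨rfl, ?_⟩
    rw [vsum_NEv, vsum_tilePos ms _ le_rfl]
  · right; right
    refine ⟨t, ht, ?_, h⟩
    rcases h with rfl | rfl
    · rw [vsum_NWv, vsum_tilePos ms t ht]
    · rw [vsum_SEv, vsum_tilePos ms t ht]

/-! ### Walk edges -/

def esum (e : Edge) : ℤ := Sym2.lift ⟨fun a b => vsum a + vsum b, fun a b => by ring⟩ e

@[simp] lemma esum_mk (a b : Vtx) : esum s(a,b) = vsum a + vsum b := rfl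

def wfst (ms : List Bool) (o : ℕ → Bool) (k : ℕ) : Vtx :=
  if k = 0 then (0,0) else diagOut ms o (k-1)

def wsnd (ms : List Bool) (o : ℕ → Bool) (k : ℕ) : Vtx :=
  if k ≤ ms.length then diagIn ms o k else NEv (tilePos ms ms.length)

def we (ms : List Bool) (o : ℕ → Bool) (k : ℕ) : Edge := s(wfst ms o k, wsnd ms o k)

lemma vsum_diagIn (ms : List Bool) (o : ℕ → Bool) (t : ℕ) (ht : t ≤ ms.length) :
    vsum (diagIn ms o t) = (t : ℤ) + 1 := by
  unfold diagIn
  split <;> [rw [vsum_NWv]; rw [vsum_SEv]] <;> rw [vsum_tilePos ms t ht]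

lemma vsum_diagOut (ms : List Bool) (o : ℕ → Bool) (t : ℕ) (ht : t ≤ ms.length) :
    vsum (diagOut ms o t) = (t : ℤ) + 1 := by
  unfold diagOut
  split <;> [rw [vsum_SEv]; rw [vsum_NWv]] <;> rw [vsum_tilePos ms t ht]

lemma diagIn_ne_diagOut (ms : List Bool) (o : ℕ → Bool) (t : ℕ) :
    diagIn ms o t ≠ diagOut ms o t := by
  unfold diagIn diagOut
  split
  · exact NWv_ne_SEv _
  · exact (NWv_ne_SEv _).symm

lemma vsum_wfst (ms : List Bool) (o : ℕ → Bool) (k : ℕ) (hk : k ≤ ms.length + 1) :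
    vsum (wfst ms o k) = (k : ℤ) := by
  unfold wfst
  split
  · subst ‹k = 0›; simp [vsum]
  · rename_i h
    rw [vsum_diagOut ms o (k-1) (by omega)]
    push_cast [Nat.cast_sub (by omega : 1 ≤ k)]; ring

lemma vsum_wsnd (ms : List Bool) (o : ℕ → Bool) (k : ℕ) (hk : k ≤ ms.length + 1) :
    vsum (wsnd ms o k) = (k : ℤ) + 1 := by
  unfold wsnd
  split
  · exact vsum_diagIn ms o k ‹_›
  · rename_i h
    have : k = ms.length + 1 := by omega
    subst this
    rw [vsum_NEv, vsum_tilePos ms _ le_rfl]; push_cast; ring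

lemma esum_we (ms : List Bool) (o : ℕ → Bool) (k : ℕ) (hk : k ≤ ms.length + 1) :
    esum (we ms o k) = 2 * (k : ℤ) + 1 := by
  rw [we, esum_mk, vsum_wfst ms o k hk, vsum_wsnd ms o k hk]; ring

lemma walkEdgeList_eq (ms : List Bool) (o : ℕ → Bool) :
    walkEdgeList ms o = (List.range (ms.length + 2)).map (we ms o) := by
  have h1 : ms.length + 2 = (ms.length + 1) + 1 := rfl
  have hhead : s(((0,0) : Vtx), diagIn ms o 0) = we ms o 0 := by
    rw [we, wfst, wsnd, if_pos rfl, if_pos (by omega)]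
  have hlast : s(diagOut ms o ms.length, NEv (tilePos ms ms.length)) = we ms o (ms.length + 1) := by
    rw [we, wfst, wsnd, if_neg (by omega), if_neg (by omega)]
    simp only [Nat.add_sub_cancel]
  have hmid : List.map (fun t => s(diagOut ms o t, diagIn ms o (t+1))) (List.range ms.length) =
      List.map (we ms o ∘ Nat.succ) (List.range ms.length) := by
    apply List.map_congr_left
    intro t ht
    rw [List.mem_range] at ht
    simp only [Function.comp, Nat.succ_eq_add_one]
    rw [we, wfst, wsnd, if_neg (by omega), if_pos (by omega)]
    simp only [Nat.add_sub_cancel]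
  rw [walkEdgeList, hhead, hmid, hlast, h1, List.range_succ, List.map_append,
    List.range_succ_eq_map, List.map_cons, List.map_map, List.map_cons, List.map_nil,
    List.cons_append]

lemma mem_walk_iff (ms : List Bool) (o : ℕ → Bool) (e : Edge) :
    e ∈ walkEdgeList ms o ↔ ∃ k ≤ ms.length + 1, we ms o k = e := by
  rw [walkEdgeList_eq]
  simp only [List.mem_map, List.mem_range]
  constructor
  · rintro ⟨k, hk, rfl⟩; exact ⟨k, by omega, rfl⟩
  · rintro ⟨k, hk, rfl⟩; exact ⟨k, by omega, rfl⟩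

lemma walk_nodup (ms : List Bool) (o : ℕ → Bool) : (walkEdgeList ms o).Nodup := by
  rw [walkEdgeList_eq]
  refine List.Nodup.map_on ?_ List.nodup_range
  intro x hx y hy hxy
  rw [List.mem_range] at hx hy
  have := esum_we ms o x (by omega)
  rw [hxy, esum_we ms o y (by omega)] at this
  omega

lemma mem_we_iff (ms : List Bool) (o : ℕ → Bool) (k : ℕ) (v : Vtx) :
    v ∈ we ms o k ↔ v = wfst ms o k ∨ v = wsnd ms o k := Sym2.mem_iff

lemma cover (ms : List Bool) (o : ℕ → Bool) (v : Vtx) (hv : v ∈ snakeVerts ms) :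
    ∃ k ≤ ms.length + 1, v ∈ we ms o k := by
  rcases (mem_snakeVerts_iff ms v).1 hv with rfl | rfl | ⟨t, ht, h⟩
  · exact ⟨0, by omega, by rw [mem_we_iff, wfst, if_pos rfl]; tauto⟩
  · refine ⟨ms.length + 1, le_rfl, ?_⟩
    rw [mem_we_iff, wsnd, if_neg (by omega)]; tauto
  · by_cases ho : o t = true
    · rcases h with rfl | rfl
      · refine ⟨t, by omega, ?_⟩
        rw [mem_we_iff, wsnd, if_pos ht, diagIn, if_pos ho]; tauto
      · refine ⟨t + 1, by omega, ?_⟩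
        rw [mem_we_iff, wfst, if_neg (by omega)]
        simp only [Nat.add_sub_cancel]
        rw [diagOut, if_pos ho]; tauto
    · rcases h with rfl | rfl
      · refine ⟨t + 1, by omega, ?_⟩
        rw [mem_we_iff, wfst, if_neg (by omega)]
        simp only [Nat.add_sub_cancel]
        rw [diagOut, if_neg ho]; tauto
      · refine ⟨t, by omega, ?_⟩
        rw [mem_we_iff, wsnd, if_pos ht, diagIn, if_neg ho]; tauto

lemma cover_unique (ms : List Bool) (o : ℕ → Bool) (v : Vtx) (k k' : ℕ)
    (hk : k ≤ ms.length + 1) (hk' : k' ≤ ms.length + 1)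
    (h1 : v ∈ we ms o k) (h2 : v ∈ we ms o k') : k = k' := by
  rw [mem_we_iff] at h1 h2
  have key : ∀ a b : ℕ, a ≤ ms.length + 1 → b ≤ ms.length + 1 →
      wfst ms o a = wsnd ms o b → False := by
    intro a b ha hb hab
    have hsum : (a : ℤ) = (b : ℤ) + 1 := by
      rw [← vsum_wfst ms o a ha, ← vsum_wsnd ms o b hb, hab]
    have hab' : a = b + 1 := by omega
    subst hab'
    have hb' : b ≤ ms.length := by omega
    rw [wfst, if_neg (by omega)] at hab
    simp only [Nat.add_sub_cancel] at hab
    rw [wsnd, if_pos hb'] at hab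
    exact diagIn_ne_diagOut ms o b hab.symm
  rcases h1 with rfl | rfl <;> rcases h2 with h2 | h2
  · have := vsum_wfst ms o k hk; rw [h2, vsum_wfst ms o k' hk'] at this; omega
  · exact absurd h2 (fun h => key k k' hk hk' h)
  · exact absurd h2.symm (fun h => key k' k hk' hk h)
  · have := vsum_wsnd ms o k hk; rw [h2, vsum_wsnd ms o k' hk'] at this; omega

/-! ### Snake edges -/

lemma mem_tileEdges (e : Edge) (p : Vtx) :
    e ∈ tileEdges p ↔ e = eS p ∨ e = eW p ∨ e = eN p ∨ e = eE p := by
  simp [tileEdges]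

lemma mem_snakeEdges_iff (ms : List Bool) (e : Edge) :
    e ∈ snakeEdges ms ↔ ∃ t ≤ ms.length, e ∈ tileEdges (tilePos ms t) := by
  simp only [snakeEdges, Finset.mem_biUnion, List.mem_toFinset]
  constructor
  · rintro ⟨p, hp, hv⟩
    obtain ⟨t, ht, rfl⟩ := (mem_positions_iff ms p).1 hp
    exact ⟨t, ht, hv⟩
  · rintro ⟨t, ht, hv⟩
    exact ⟨_, (mem_positions_iff ms _).2 ⟨t, ht, rfl⟩, hv⟩

lemma eS_eq (p : Vtx) : eS p = s(p, SEv p) := rfl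
lemma eW_eq (p : Vtx) : eW p = s(p, NWv p) := rfl
lemma eN_eq (p : Vtx) : eN p = s(NWv p, NEv p) := rfl
lemma eE_eq (p : Vtx) : eE p = s(SEv p, NEv p) := rfl

lemma unit_of_mem_snakeEdges (ms : List Bool) (e : Edge) (he : e ∈ snakeEdges ms) :
    ∃ a : Vtx, e = s(a, (a.1 + 1, a.2)) ∨ e = s(a, (a.1, a.2 + 1)) := by
  obtain ⟨t, ht, h⟩ := (mem_snakeEdges_iff ms e).1 he
  rw [mem_tileEdges] at h
  set p := tilePos ms t
  rcases h with rfl | rfl | rfl | rfl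
  · exact ⟨p, Or.inl rfl⟩
  · exact ⟨p, Or.inr rfl⟩
  · exact ⟨(p.1, p.2 + 1), Or.inl rfl⟩
  · exact ⟨(p.1 + 1, p.2), Or.inr rfl⟩

lemma other_endpoint (ms : List Bool) (e : Edge) (v : Vtx) (he : e ∈ snakeEdges ms)
    (hv : v ∈ e) : ∃ w, e = s(v, w) ∧ w ≠ v ∧
      (vsum w = vsum v + 1 ∨ vsum w = vsum v - 1) := by
  obtain ⟨a, h | h⟩ := unit_of_mem_snakeEdges ms e he <;> subst h <;>
    rw [Sym2.mem_iff] at hv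
  · rcases hv with rfl | rfl
    · exact ⟨(v.1 + 1, v.2), rfl, by simp [Prod.ext_iff], Or.inl (by simp [vsum]; ring)⟩
    · refine ⟨a, Sym2.eq_swap, ?_, Or.inr (by simp [vsum]; ring)⟩
      simp only [ne_eq, Prod.ext_iff, not_and]; intro h; omega
  · rcases hv with rfl | rfl
    · exact ⟨(v.1, v.2 + 1), rfl, by simp [Prod.ext_iff], Or.inl (by simp [vsum]; ring)⟩
    · refine ⟨a, Sym2.eq_swap, ?_, Or.inr (by simp [vsum]; ring)⟩
      simp only [ne_eq, Prod.ext_iff, not_and]; intro h; omega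

lemma endpoint_mem_snakeVerts (ms : List Bool) (e : Edge) (v : Vtx)
    (he : e ∈ snakeEdges ms) (hv : v ∈ e) : v ∈ snakeVerts ms := by
  obtain ⟨t, ht, h⟩ := (mem_snakeEdges_iff ms e).1 he
  rw [mem_tileEdges] at h
  have hm : v ∈ tileVerts (tilePos ms t) := by
    rcases h with rfl | rfl | rfl | rfl <;>
      rw [mem_tileVerts] <;>
      [rw [eS_eq, Sym2.mem_iff] at hv; rw [eW_eq, Sym2.mem_iff] at hv;
       rw [eN_eq, Sym2.mem_iff] at hv; rw [eE_eq, Sym2.mem_iff] at hv] <;> tauto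
  rw [snakeVerts, Finset.mem_biUnion]
  exact ⟨_, List.mem_toFinset.2 ((mem_positions_iff ms _).2 ⟨t, ht, rfl⟩), hm⟩

/-! ### Valid orientations -/

def VOk (ms : List Bool) (o : ℕ → Bool) : Prop :=
  ∀ t < ms.length, ¬(o t = !(ms.getD t true) ∧ o (t+1) = !(ms.getD t true))

lemma we_mem_snakeEdges (ms : List Bool) (o : ℕ → Bool) (hok : VOk ms o)
    (k : ℕ) (hk : k ≤ ms.length + 1) : we ms o k ∈ snakeEdges ms := by
  rw [mem_snakeEdges_iff]
  rcases Nat.eq_zero_or_pos k with rfl | hk0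
  · -- first edge
    refine ⟨0, by omega, ?_⟩
    rw [we, wfst, wsnd, if_pos rfl, if_pos (by omega), mem_tileEdges, tilePos_zero, diagIn,
      tilePos_zero]
    cases h : o 0 <;> simp [eS_eq, eW_eq] <;> tauto
  obtain ⟨t, rfl⟩ : ∃ t, k = t + 1 := ⟨k - 1, by omega⟩
  rw [we, wfst, wsnd, if_neg (by omega)]
  simp only [Nat.add_sub_cancel]
  by_cases hlast : t + 1 ≤ ms.length
  · -- middle edge
    rw [if_pos hlast, diagOut, diagIn, tilePos_succ' ms t (by omega)]
    have hv := hok t (by omega)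
    cases hm : ms.getD t true <;> cases h1 : o t <;> cases h2 : o (t+1) <;>
      rw [hm, h1, h2] at hv <;>
      simp only [Bool.not_true, Bool.not_false] at hv
    · -- top move, (F,F): eN at tile t
      exact ⟨t, by omega, by rw [mem_tileEdges]; right; right; left; rw [eN_eq]; rfl⟩
    · -- top move, (F,T): eW at tile t+1
      refine ⟨t + 1, hlast, ?_⟩
      rw [mem_tileEdges, tilePos_succ' ms t (by omega), hm]
      right; left; rw [eW_eq]; rfl
    · -- top move, (T,F): eE at tile t
      exact ⟨t, by omega, by rw [mem_tileEdges]; right; right; right; rw [eE_eq]; rfl⟩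
    · -- top move, (T,T): forbidden
      exact absurd ⟨trivial, trivial⟩ hv
    · -- right move, (F,F): forbidden
      exact absurd ⟨trivial, trivial⟩ hv
    · -- right move, (F,T): eN at tile t
      exact ⟨t, by omega, by rw [mem_tileEdges]; right; right; left; rw [eN_eq]; rfl⟩
    · -- right move, (T,F): eS at tile t+1
      refine ⟨t + 1, hlast, ?_⟩
      rw [mem_tileEdges, tilePos_succ' ms t (by omega), hm]
      left; rw [eS_eq]; rfl
    · -- right move, (T,T): eE at tile t
      exact ⟨t, by omega, by rw [mem_tileEdges]; right; right; right; rw [eE_eq]; rfl⟩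
  · -- last edge
    have : t = ms.length := by omega
    subst this
    rw [if_neg hlast, diagOut]
    refine ⟨ms.length, le_rfl, ?_⟩
    rw [mem_tileEdges]
    cases h : o ms.length
    · right; right; left; rw [eN_eq]; rfl
    · right; right; right; rw [eE_eq]; rfl

lemma mem_walk_toFinset (ms : List Bool) (o : ℕ → Bool) (e : Edge) :
    e ∈ (walkEdgeList ms o).toFinset ↔ ∃ k ≤ ms.length + 1, we ms o k = e := by
  rw [List.mem_toFinset, mem_walk_iff]

lemma pm_of_VOk (ms : List Bool) (o : ℕ → Bool) (hok : VOk ms o) :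
    IsPerfectMatching ms (walkEdgeList ms o).toFinset := by
  constructor
  · intro e he
    obtain ⟨k, hk, rfl⟩ := (mem_walk_toFinset ms o e).1 he
    exact we_mem_snakeEdges ms o hok k hk
  · intro v hv
    obtain ⟨k, hk, hvk⟩ := cover ms o v hv
    refine ⟨we ms o k, ⟨(mem_walk_toFinset ms o _).2 ⟨k, hk, rfl⟩, hvk⟩, ?_⟩
    rintro e ⟨he, hve⟩
    obtain ⟨k', hk', rfl⟩ := (mem_walk_toFinset ms o e).1 he
    rw [cover_unique ms o v k' k hk' hk hve hvk]

/-! ### Height sets and order ideals -/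

lemma mem_heightSet (ms : List Bool) (o : ℕ → Bool) (t : ℕ) :
    t ∈ heightSet ms o ↔ t ≤ ms.length ∧ (o t = true ↔ Even t) := Iff.rfl

lemma heightSet_congr (ms : List Bool) (o o' : ℕ → Bool)
    (h : ∀ t ≤ ms.length, o t = o' t) : heightSet ms o = heightSet ms o' := by
  ext t
  rw [mem_heightSet, mem_heightSet]
  constructor <;> rintro ⟨h1, h2⟩ <;> refine ⟨h1, ?_⟩
  · rw [← h t h1]; exact h2
  · rw [h t h1]; exact h2

lemma diagIn_congr (ms : List Bool) (o o' : ℕ → Bool) (t : ℕ) (h : o t = o' t) :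
    diagIn ms o t = diagIn ms o' t := by rw [diagIn, diagIn, h]

lemma diagOut_congr (ms : List Bool) (o o' : ℕ → Bool) (t : ℕ) (h : o t = o' t) :
    diagOut ms o t = diagOut ms o' t := by rw [diagOut, diagOut, h]

lemma we_congr (ms : List Bool) (o o' : ℕ → Bool) (k : ℕ) (hk : k ≤ ms.length + 1)
    (h : ∀ t ≤ ms.length, o t = o' t) : we ms o k = we ms o' k := by
  rw [we, we]
  have h1 : wfst ms o k = wfst ms o' k := by
    rw [wfst, wfst]
    by_cases h0 : k = 0
    · rw [if_pos h0, if_pos h0]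
    · rw [if_neg h0, if_neg h0]
      exact diagOut_congr ms o o' _ (h _ (by omega))
  have h2 : wsnd ms o k = wsnd ms o' k := by
    rw [wsnd, wsnd]
    by_cases h0 : k ≤ ms.length
    · rw [if_pos h0, if_pos h0]
      exact diagIn_congr ms o o' _ (h _ h0)
    · rw [if_neg h0, if_neg h0]
  rw [h1, h2]

lemma walk_congr (ms : List Bool) (o o' : ℕ → Bool)
    (h : ∀ t ≤ ms.length, o t = o' t) : walkEdgeList ms o = walkEdgeList ms o' := by
  rw [walkEdgeList_eq, walkEdgeList_eq]
  apply List.map_congr_left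
  intro k hk
  rw [List.mem_range] at hk
  exact we_congr ms o o' k (by omega) h

lemma step_closure (ms : List Bool) (o : ℕ → Bool) (hok : VOk ms o) (a b : ℕ)
    (hrel : quiverRel ms a b) (hb : b ∈ heightSet ms o) : a ∈ heightSet ms o := by
  rcases hrel with ⟨rfl, ha, hms⟩ | ⟨rfl, ha, hms⟩
  · obtain ⟨hb1, hb2⟩ := hb
    refine ⟨by omega, ?_⟩
    have hv := hok a ha
    cases hm : ms.getD a true <;> rw [hm] at hv hms <;>
      cases h1 : o a <;> rw [h1] at hv <;>
      cases h2 : o (a+1) <;> rw [h2] at hv hb2 <;>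
      simp only [Bool.not_true, Bool.not_false] at hv <;>
      simp_all [Nat.even_add_one, Nat.even_iff, Nat.odd_iff] <;> omega
  · obtain ⟨hb1, hb2⟩ := hb
    refine ⟨by omega, ?_⟩
    have hv := hok b ha
    cases hm : ms.getD b true <;> rw [hm] at hv hms <;>
      cases h1 : o b <;> rw [h1] at hv hb2 <;>
      cases h2 : o (b+1) <;> rw [h2] at hv <;>
      simp only [Bool.not_true, Bool.not_false] at hv <;>
      simp_all [Nat.even_add_one, Nat.even_iff, Nat.odd_iff] <;> omega

lemma ideal_of_VOk (ms : List Bool) (o : ℕ → Bool) (hok : VOk ms o) :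
    IsOrderIdealQ ms (heightSet ms o) := by
  constructor
  · intro t ht; exact ht.1
  · intro x hx y hy
    rcases hy with rfl | htg
    · exact hx
    · induction htg with
      | single hr => exact step_closure ms o hok _ _ hr hx
      | tail _ hr ih => exact ih (step_closure ms o hok _ _ hr hx)

open Classical in
noncomputable def oI (I : Set ℕ) : ℕ → Bool := fun t => decide (Even t ↔ t ∈ I)

lemma oI_iff (I : Set ℕ) (t : ℕ) : oI I t = true ↔ (Even t ↔ t ∈ I) := by
  simp [oI]

lemma oI_false_iff (I : Set ℕ) (t : ℕ) : oI I t = false ↔ ¬(Even t ↔ t ∈ I) := by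
  simp [oI]

lemma heightSet_oI (ms : List Bool) (I : Set ℕ) (hI : I ⊆ {t | t ≤ ms.length}) :
    heightSet ms (oI I) = I := by
  ext t
  rw [mem_heightSet]
  constructor
  · rintro ⟨h1, h2⟩
    by_cases he : Even t
    · exact (((oI_iff I t).1 (h2.2 he)).1 he)
    · by_contra hni
      have : oI I t = true := (oI_iff I t).2 (by tauto)
      exact he (h2.1 this)
  · intro ht
    refine ⟨hI ht, ?_⟩
    constructor
    · intro h; exact ((oI_iff I t).1 h).2 ht
    · intro he; exact (oI_iff I t).2 (by tauto)

lemma leQ_single (ms : List Bool) (i j : ℕ) (h : quiverRel ms i j) : leQ ms i j :=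
  Or.inr (Relation.TransGen.single h)

lemma VOk_oI (ms : List Bool) (I : Set ℕ) (hI : IsOrderIdealQ ms I) : VOk ms (oI I) := by
  intro t ht
  rintro ⟨h1, h2⟩
  cases hm : ms.getD t true <;> rw [hm] at h1 h2 <;>
    simp only [Bool.not_true, Bool.not_false] at h1 h2
  · -- top move: oI t = true, oI (t+1) = true
    have e1 := (oI_iff I t).1 h1
    have e2 := (oI_iff I (t+1)).1 h2
    by_cases he : Even t
    · -- t ∈ I, t+1 ∈ I forced even: contradiction via parity
      have hrel : quiverRel ms (t+1) t := Or.inr ⟨rfl, ht, by rw [hm]; simp [he]⟩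
      have ht1 : t + 1 ∈ I := hI.2 t (e1.1 he) (t+1) (leQ_single ms _ _ hrel)
      have : Even (t+1) := e2.2 ht1
      simp [Nat.even_add_one, he] at this
    · have hrel : quiverRel ms t (t+1) := Or.inl ⟨rfl, ht, by rw [hm]; simp [he]⟩
      have ht1 : t + 1 ∈ I := e2.1 (by simp [Nat.even_add_one, he])
      have : t ∈ I := hI.2 (t+1) ht1 t (leQ_single ms _ _ hrel)
      exact he (e1.2 this)
  · -- right move: oI t = false, oI (t+1) = false
    have e1 := (oI_false_iff I t).1 h1
    have e2 := (oI_false_iff I (t+1)).1 h2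
    by_cases he : Even t
    · -- t ∉ I, t+1 ∈ I, arrow t → t+1
      have hrel : quiverRel ms t (t+1) := Or.inl ⟨rfl, ht, by rw [hm]; simp [he]⟩
      have ht1 : t + 1 ∈ I := by
        by_contra hc
        exact e2 (by simp [Nat.even_add_one, he, hc])
      have : t ∈ I := hI.2 (t+1) ht1 t (leQ_single ms _ _ hrel)
      exact e1 (by tauto)
    · -- t ∈ I, t+1 ∉ I, arrow t+1 → t
      have hrel : quiverRel ms (t+1) t := Or.inr ⟨rfl, ht, by rw [hm]; simp [he]⟩
      have ht0 : t ∈ I := by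
        by_contra hc
        exact e1 (by tauto)
      have ht1 : t + 1 ∈ I := hI.2 t ht0 (t+1) (leQ_single ms _ _ hrel)
      exact e2 (by simp [Nat.even_add_one, he, ht1])

/-! ### From matchings to orientations -/

lemma we_mem_of_induced (ms : List Bool) (P : Finset Edge) (o : ℕ → Bool)
    (h : IsInducedOrientation ms P o) (k : ℕ) (hk : k ≤ ms.length + 1) :
    we ms o k ∈ P := by
  rw [h.2, mem_walk_toFinset]
  exact ⟨k, hk, rfl⟩

lemma diagIn_inj (ms : List Bool) (o o' : ℕ → Bool) (t : ℕ)
    (h : diagIn ms o t = diagIn ms o' t) : o t = o' t := by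
  rw [diagIn, diagIn] at h
  cases h1 : o t <;> rw [h1] at h <;> cases h2 : o' t <;> rw [h2] at h <;>
    simp only [Bool.false_eq_true, if_false, if_true] at h ⊢
  · exact absurd h.symm (NWv_ne_SEv _)
  · exact absurd h (NWv_ne_SEv _)

lemma diagOut_mem_snakeVerts (ms : List Bool) (o : ℕ → Bool) (t : ℕ) (ht : t ≤ ms.length) :
    diagOut ms o t ∈ snakeVerts ms := by
  rw [mem_snakeVerts_iff, diagOut]
  cases h : o t
  · exact Or.inr (Or.inr ⟨t, ht, Or.inl (by simp)⟩)
  · exact Or.inr (Or.inr ⟨t, ht, Or.inr (by simp)⟩)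

lemma zero_mem_snakeVerts (ms : List Bool) : ((0,0) : Vtx) ∈ snakeVerts ms := by
  rw [mem_snakeVerts_iff]; left; rfl

lemma sym2_mk_left_inj (v a b : Vtx) (h : s(v, a) = s(v, b)) : a = b := by
  rw [Sym2.eq_iff] at h
  rcases h with ⟨-, h⟩ | ⟨h1, h2⟩
  · exact h
  · exact h2.trans h1

lemma we_zero (ms : List Bool) (o : ℕ → Bool) :
    we ms o 0 = s(((0,0) : Vtx), diagIn ms o 0) := by
  rw [we, wfst, if_pos rfl, wsnd, if_pos (by omega)]

lemma we_succ (ms : List Bool) (o : ℕ → Bool) (t : ℕ) :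
    we ms o (t+1) = s(diagOut ms o t, wsnd ms o (t+1)) := by
  rw [we, wfst, if_neg (by omega)]
  simp only [Nat.add_sub_cancel]

lemma wsnd_eq (ms : List Bool) (o : ℕ → Bool) (t : ℕ) (ht : t ≤ ms.length) :
    wsnd ms o t = diagIn ms o t := by rw [wsnd, if_pos ht]

lemma orient_unique (ms : List Bool) (P : Finset Edge) (o o' : ℕ → Bool)
    (hP : IsPerfectMatching ms P) (h1 : IsInducedOrientation ms P o)
    (h2 : IsInducedOrientation ms P o') : ∀ t ≤ ms.length, o t = o' t := by
  intro t
  induction t with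
  | zero =>
    intro ht
    have e1 := we_mem_of_induced ms P o h1 0 (by omega)
    have e2 := we_mem_of_induced ms P o' h2 0 (by omega)
    have hu := hP.2 ((0,0) : Vtx) (zero_mem_snakeVerts ms)
    have hv1 : ((0,0) : Vtx) ∈ we ms o 0 := by
      rw [mem_we_iff, wfst, if_pos rfl]; tauto
    have hv2 : ((0,0) : Vtx) ∈ we ms o' 0 := by
      rw [mem_we_iff, wfst, if_pos rfl]; tauto
    have heq : we ms o 0 = we ms o' 0 :=
      (hu.unique ⟨e1, hv1⟩ ⟨e2, hv2⟩)
    rw [we_zero, we_zero] at heq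
    exact diagIn_inj ms o o' 0 (sym2_mk_left_inj _ _ _ heq)
  | succ t ih =>
    intro ht
    have hot := ih (by omega)
    have hvout : diagOut ms o t = diagOut ms o' t := diagOut_congr ms o o' t hot
    have e1 := we_mem_of_induced ms P o h1 (t+1) (by omega)
    have e2 := we_mem_of_induced ms P o' h2 (t+1) (by omega)
    have hu := hP.2 (diagOut ms o t) (diagOut_mem_snakeVerts ms o t (by omega))
    have hv1 : diagOut ms o t ∈ we ms o (t+1) := by
      rw [mem_we_iff, wfst, if_neg (by omega)]
      simp only [Nat.add_sub_cancel]; tauto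
    have hv2 : diagOut ms o t ∈ we ms o' (t+1) := by
      rw [mem_we_iff, wfst, if_neg (by omega)]
      simp only [Nat.add_sub_cancel, hvout]; tauto
    have heq : we ms o (t+1) = we ms o' (t+1) := hu.unique ⟨e1, hv1⟩ ⟨e2, hv2⟩
    rw [we_succ, we_succ, ← hvout, wsnd_eq ms o _ ht, wsnd_eq ms o' _ ht] at heq
    exact diagIn_inj ms o o' (t+1) (sym2_mk_left_inj _ _ _ heq)

lemma VOk_of_induced (ms : List Bool) (P : Finset Edge) (o : ℕ → Bool)
    (hsub : P ⊆ snakeEdges ms) (h : IsInducedOrientation ms P o) : VOk ms o := by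
  intro t ht
  rintro ⟨h1, h2⟩
  have he := hsub (we_mem_of_induced ms P o h (t+1) (by omega))
  obtain ⟨a, ha⟩ := unit_of_mem_snakeEdges ms _ he
  rw [we, wfst, if_neg (by omega), wsnd, if_pos (by omega : t + 1 ≤ ms.length)] at ha
  simp only [Nat.add_sub_cancel] at ha
  rw [diagOut, diagIn, h1, h2, tilePos_succ' ms t ht] at ha
  cases hm : ms.getD t true <;> rw [hm] at ha <;>
    simp only [Bool.not_true, Bool.not_false, Bool.false_eq_true, if_false, if_true] at ha <;>
    rcases ha with ha | ha <;> rw [Sym2.eq_iff] at ha <;>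
    rcases ha with ⟨ha1, ha2⟩ | ⟨ha1, ha2⟩ <;>
    simp only [SEv, NWv, Prod.ext_iff] at ha1 ha2 <;> omega

noncomputable def pmo (ms : List Bool) (P : Finset Edge) : ℕ → Bool
  | 0 => decide (s(((0,0) : Vtx), NWv ((0,0) : Vtx)) ∈ P)
  | t+1 =>
    let b := pmo ms P t
    decide (s((if b then SEv (tilePos ms t) else NWv (tilePos ms t)),
      NWv (tilePos ms (t+1))) ∈ P)

lemma pmo_succ (ms : List Bool) (P : Finset Edge) (t : ℕ) :
    pmo ms P (t+1) = decide (s(diagOut ms (pmo ms P) t, NWv (tilePos ms (t+1))) ∈ P) := rfl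

lemma chain (ms : List Bool) (P : Finset Edge) (hP : IsPerfectMatching ms P) :
    ∀ k ≤ ms.length + 1, ∀ j ≤ k, we ms (pmo ms P) j ∈ P := by
  set o := pmo ms P with ho
  have base : we ms o 0 ∈ P := by
    have hEU := hP.2 ((0,0) : Vtx) (zero_mem_snakeVerts ms)
    obtain ⟨e, ⟨heP, hve⟩, -⟩ := hEU
    obtain ⟨w, rfl, hwne, hsum⟩ := other_endpoint ms e _ (hP.1 heP) hve
    have hw : w ∈ snakeVerts ms :=
      endpoint_mem_snakeVerts ms _ w (hP.1 heP) (Sym2.mem_mk_right _ _)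
    have hv0 : vsum ((0,0) : Vtx) = 0 := by simp [vsum]
    have hws : vsum w = 1 := by
      rcases vsum_classify ms w hw with ⟨rfl, h⟩ | ⟨rfl, h⟩ | ⟨u, hu, h, -⟩ <;> omega
    have hwc : w = NWv ((0,0) : Vtx) ∨ w = SEv ((0,0) : Vtx) := by
      rcases vsum_classify ms w hw with ⟨rfl, h⟩ | ⟨rfl, h⟩ | ⟨u, hu, h, hc⟩
      · omega
      · omega
      · have : u = 0 := by omega
        subst this
        rw [tilePos_zero] at hc
        exact hc
    have hwe0 : we ms o 0 = s(((0,0) : Vtx), diagIn ms o 0) := by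
      rw [we, wfst, if_pos rfl, wsnd, if_pos (by omega)]
    rcases hwc with rfl | rfl
    · have hb : o 0 = true := by
        rw [ho]
        exact decide_eq_true heP
      rw [hwe0, diagIn, hb, if_pos rfl, tilePos_zero]
      exact heP
    · have hb : o 0 = false := by
        rw [ho]
        apply decide_eq_false
        intro hmem
        have := (hP.2 ((0,0) : Vtx) (zero_mem_snakeVerts ms)).unique ⟨hmem, Sym2.mem_mk_left _ _⟩ ⟨heP, hve⟩
        rw [Sym2.eq_iff] at this
        rcases this with ⟨-, hh⟩ | ⟨hh, -⟩ <;>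
          simp only [NWv, SEv, Prod.ext_iff] at hh <;> omega
      rw [hwe0, diagIn, hb]
      simp only [Bool.false_eq_true, if_false, if_true]
      rw [tilePos_zero]
      exact heP
  intro k hk
  induction k with
  | zero => intro j hj; interval_cases j; exact base
  | succ k ih =>
    have ih' := ih (by omega)
    intro j hj
    rcases Nat.lt_or_ge j (k+1) with hj' | hj'
    · exact ih' j (by omega)
    have hjk : j = k + 1 := by omega
    subst hjk
    -- main step
    set v := diagOut ms o k with hv
    have hkn : k ≤ ms.length := by omega
    have hvmem : v ∈ snakeVerts ms := diagOut_mem_snakeVerts ms o k hkn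
    have hEU := hP.2 v hvmem
    obtain ⟨e, ⟨heP, hve⟩, -⟩ := hEU
    obtain ⟨w, rfl, hwne, hsum⟩ := other_endpoint ms e v (hP.1 heP) hve
    have hw : w ∈ snakeVerts ms :=
      endpoint_mem_snakeVerts ms _ w (hP.1 heP) (Sym2.mem_mk_right _ _)
    have hvs : vsum v = (k : ℤ) + 1 := vsum_diagOut ms o k hkn
    -- rule out the backward case
    have hwsum : vsum w = (k : ℤ) + 2 := by
      rcases hsum with h | h
      · omega
      · exfalso
        have hws : vsum w = (k : ℤ) := by omega
        have hcov : ∃ i ≤ k, w ∈ we ms o i := by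
          rcases vsum_classify ms w hw with ⟨rfl, hh⟩ | ⟨rfl, hh⟩ | ⟨u, hu, hh, hc⟩
          · refine ⟨0, by omega, ?_⟩
            rw [mem_we_iff, wfst, if_pos rfl]; tauto
          · omega
          · have hu' : u + 1 = k := by omega
            rcases hc with rfl | rfl
            · cases hou : o u
              · -- NWv, o u = false: w = diagOut u = wfst (u+1)
                refine ⟨u + 1, by omega, ?_⟩
                rw [mem_we_iff, wfst, if_neg (by omega)]
                simp only [Nat.add_sub_cancel]
                rw [diagOut, hou]
                simp only [Bool.false_eq_true, if_false, if_true]; tauto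
              · -- NWv, o u = true: w = diagIn u = wsnd u
                refine ⟨u, by omega, ?_⟩
                rw [mem_we_iff, wsnd, if_pos (by omega), diagIn, hou]
                simp only [Bool.false_eq_true, if_false, if_true]; tauto
            · cases hou : o u
              · refine ⟨u, by omega, ?_⟩
                rw [mem_we_iff, wsnd, if_pos (by omega), diagIn, hou]
                simp only [Bool.false_eq_true, if_false, if_true]; tauto
              · refine ⟨u + 1, by omega, ?_⟩
                rw [mem_we_iff, wfst, if_neg (by omega)]
                simp only [Nat.add_sub_cancel]
                rw [diagOut, hou]
                simp only [Bool.false_eq_true, if_false, if_true]; tauto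
        obtain ⟨i, hi, hwi⟩ := hcov
        have hwei : we ms o i ∈ P := ih' i hi
        have hww : w ∈ snakeVerts ms := hw
        have := (hP.2 w hww).unique ⟨heP, Sym2.mem_mk_right _ _⟩ ⟨hwei, hwi⟩
        -- so s(v,w) = we ms o i, hence v ∈ we ms o i
        have hvin : v ∈ we ms o i := this ▸ Sym2.mem_mk_left _ _
        rw [mem_we_iff] at hvin
        rcases hvin with hvin | hvin
        · have := vsum_wfst ms o i (by omega)
          rw [← hvin, hvs] at this; omega
        · have hik : i = k := by
            have := vsum_wsnd ms o i (by omega)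
            rw [← hvin, hvs] at this; omega
          rw [hik, wsnd, if_pos hkn] at hvin
          exact diagIn_ne_diagOut ms o k (hvin.symm.trans hv)
    -- now the forward case: vsum w = k + 2
    have hwe : we ms o (k+1) = s(v, wsnd ms o (k+1)) := we_succ ms o k
    rcases Nat.lt_or_ge k ms.length with hkn' | hkn'
    · -- k < ms.length : w is NW or SE of tile k+1
      have hwc : w = NWv (tilePos ms (k+1)) ∨ w = SEv (tilePos ms (k+1)) := by
        rcases vsum_classify ms w hw with ⟨rfl, hh⟩ | ⟨rfl, hh⟩ | ⟨u, hu, hh, hc⟩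
        · omega
        · omega
        · have : u = k + 1 := by omega
          subst this; exact hc
      rcases hwc with rfl | rfl
      · -- w = NW (pos (k+1)) : pmo (k+1) = true
        have hb : o (k+1) = true := by
          rw [ho, pmo_succ, ← ho]
          exact decide_eq_true heP
        rw [hwe, wsnd, if_pos (by omega : k + 1 ≤ ms.length), diagIn, hb, if_pos rfl]
        exact heP
      · -- w = SE (pos (k+1)) : pmo (k+1) = false
        have hb : o (k+1) = false := by
          rw [ho, pmo_succ, ← ho]
          apply decide_eq_false
          intro hmem
          have := (hP.2 v hvmem).unique ⟨hmem, Sym2.mem_mk_left _ _⟩ ⟨heP, hve⟩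
          rw [Sym2.eq_iff] at this
          rcases this with ⟨-, hh⟩ | ⟨hh, -⟩
          · exact NWv_ne_SEv _ hh
          · have hcontra := congrArg vsum hh
            rw [vsum_diagOut ms o k hkn, vsum_SEv, vsum_tilePos ms (k+1) (by omega)] at hcontra
            push_cast at hcontra; omega
        rw [hwe, wsnd, if_pos (by omega : k + 1 ≤ ms.length), diagIn, hb]
        simp only [Bool.false_eq_true, if_false, if_true]
        exact heP
    · -- k = ms.length : w = NE of last tile
      have hkeq : k = ms.length := by omega
      have hwc : w = NEv (tilePos ms ms.length) := by
        rcases vsum_classify ms w hw with ⟨rfl, hh⟩ | ⟨rfl, hh⟩ | ⟨u, hu, hh, hc⟩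
        · omega
        · rfl
        · omega
      subst hwc
      rw [hwe, wsnd, if_neg (by omega)]
      exact heP

lemma induced_pmo (ms : List Bool) (P : Finset Edge) (hP : IsPerfectMatching ms P) :
    IsInducedOrientation ms P (pmo ms P) := by
  refine ⟨walk_nodup ms _, ?_⟩
  apply Finset.ext
  intro e
  constructor
  · intro heP
    have he := hP.1 heP
    obtain ⟨a, ha⟩ := unit_of_mem_snakeEdges ms e he
    have hva : a ∈ e := by
      rcases ha with rfl | rfl <;> exact Sym2.mem_mk_left _ _
    have haV : a ∈ snakeVerts ms := endpoint_mem_snakeVerts ms e a he hva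
    obtain ⟨k, hk, hcov⟩ := cover ms (pmo ms P) a haV
    have hwe : we ms (pmo ms P) k ∈ P := chain ms P hP (ms.length + 1) le_rfl k hk
    have := (hP.2 a haV).unique ⟨heP, hva⟩ ⟨hwe, hcov⟩
    rw [this, mem_walk_toFinset]
    exact ⟨k, hk, rfl⟩
  · intro he
    obtain ⟨k, hk, rfl⟩ := (mem_walk_toFinset ms _ e).1 he
    exact chain ms P hP (ms.length + 1) le_rfl k hk

/-! ### Twists -/

lemma we_eq_extract (ms : List Bool) (o : ℕ → Bool) (P : Finset Edge)
    (hio : IsInducedOrientation ms P o) (t : ℕ) (ht : t ≤ ms.length + 1)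
    (x y : Vtx) (hx : vsum x = (t : ℤ)) (hy : vsum y = (t : ℤ) + 1)
    (he : s(x, y) ∈ P) : wfst ms o t = x ∧ wsnd ms o t = y := by
  rw [hio.2, mem_walk_toFinset] at he
  obtain ⟨k, hk, hke⟩ := he
  have h1 := esum_we ms o k hk
  rw [hke, esum_mk, hx, hy] at h1
  have hkt : k = t := by omega
  subst hkt
  rw [we, Sym2.eq_iff] at hke
  rcases hke with h | ⟨h1', h2'⟩
  · exact h
  · exfalso
    have h2 := vsum_wfst ms o k hk
    rw [h1', hy] at h2
    omega

lemma o_false_of_diagIn_SE (ms : List Bool) (o : ℕ → Bool) (t : ℕ)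
    (h : diagIn ms o t = SEv (tilePos ms t)) : o t = false := by
  cases ho : o t
  · rfl
  · rw [diagIn, ho, if_pos rfl] at h
    exact absurd h (NWv_ne_SEv _)

lemma o_true_of_diagIn_NW (ms : List Bool) (o : ℕ → Bool) (t : ℕ)
    (h : diagIn ms o t = NWv (tilePos ms t)) : o t = true := by
  cases ho : o t
  · rw [diagIn, ho] at h
    simp only [Bool.false_eq_true, if_false] at h
    exact absurd h.symm (NWv_ne_SEv _)
  · rfl

/-- The twisted orientation. -/
def twf (o : ℕ → Bool) (t : ℕ) : ℕ → Bool := fun s => if s = t then !(o t) else o s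

lemma twf_self (o : ℕ → Bool) (t : ℕ) : twf o t t = !(o t) := if_pos rfl

lemma twf_other (o : ℕ → Bool) (t s : ℕ) (h : s ≠ t) : twf o t s = o s := if_neg h

section Twist

variable (ms : List Bool) (o : ℕ → Bool) (t : ℕ)

lemma twist_wfst (ht : t ≤ ms.length) (hwf : wfst ms o t = tilePos ms t) :
    wfst ms (twf o t) t = tilePos ms t := by
  by_cases h0 : t = 0
  · rw [wfst, if_pos h0, ← hwf, wfst, if_pos h0]
  · rw [wfst, if_neg h0]
    rw [wfst, if_neg h0] at hwf
    rw [← hwf]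
    exact diagOut_congr ms _ o _ (twf_other o t _ (by omega))

lemma twist_wsnd (hws : wsnd ms o (t+1) = NEv (tilePos ms t)) :
    wsnd ms (twf o t) (t+1) = NEv (tilePos ms t) := by
  by_cases h1 : t + 1 ≤ ms.length
  · rw [wsnd, if_pos h1]
    rw [wsnd, if_pos h1] at hws
    rw [← hws]
    exact diagIn_congr ms _ o _ (twf_other o t _ (by omega))
  · rw [wsnd, if_neg h1]
    rw [wsnd, if_neg h1] at hws
    exact hws

lemma twist_we_other (k : ℕ) (hk1 : k ≠ t) (hk2 : k ≠ t + 1) :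
    we ms (twf o t) k = we ms o k := by
  rw [we, we]
  have h1 : wfst ms (twf o t) k = wfst ms o k := by
    by_cases h0 : k = 0
    · rw [wfst, if_pos h0, wfst, if_pos h0]
    · rw [wfst, if_neg h0, wfst, if_neg h0]
      exact diagOut_congr ms _ o _ (twf_other o t _ (by omega))
  have h2 : wsnd ms (twf o t) k = wsnd ms o k := by
    by_cases h0 : k ≤ ms.length
    · rw [wsnd, if_pos h0, wsnd, if_pos h0]
      exact diagIn_congr ms _ o _ (twf_other o t _ hk1)
    · rw [wsnd, if_neg h0, wsnd, if_neg h0]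
  rw [h1, h2]

lemma o_succ_eq (ht1 : t + 1 ≤ ms.length) (hws : wsnd ms o (t+1) = NEv (tilePos ms t)) :
    o (t + 1) = ms.getD t true := by
  rw [wsnd_eq ms o _ ht1] at hws
  rw [NEv_eq ms t (by omega)] at hws
  rw [diagIn] at hws
  cases hb : o (t+1) <;> rw [hb] at hws <;> cases hm : ms.getD t true <;> rw [hm] at hws <;>
    simp only [Bool.false_eq_true, if_false, if_true] at hws ⊢
  all_goals first
    | rfl
    | exact ((NWv_ne_SEv _) hws).elim
    | exact ((NWv_ne_SEv _) hws.symm).elim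

lemma o_pred_eq (ht0 : t ≠ 0) (ht : t ≤ ms.length) (hwf : wfst ms o t = tilePos ms t) :
    o (t - 1) = ms.getD (t - 1) true := by
  rw [wfst, if_neg ht0] at hwf
  obtain ⟨s, rfl⟩ : ∃ s, t = s + 1 := ⟨t - 1, by omega⟩
  simp only [Nat.add_sub_cancel] at hwf ⊢
  rw [tilePos_succ' ms s (by omega), diagOut] at hwf
  cases hb : o s <;> rw [hb] at hwf <;> cases hm : ms.getD s true <;> rw [hm] at hwf <;>
    simp only [Bool.false_eq_true, if_false, if_true] at hwf ⊢
  all_goals first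
    | rfl
    | exact ((NWv_ne_SEv _) hwf).elim
    | exact ((NWv_ne_SEv _) hwf.symm).elim

lemma twist_VOk (hok : VOk ms o) (ht : t ≤ ms.length)
    (hwf : wfst ms o t = tilePos ms t) (hws : wsnd ms o (t+1) = NEv (tilePos ms t)) :
    VOk ms (twf o t) := by
  intro s hs
  rintro ⟨c1, c2⟩
  by_cases hst : s = t
  · subst hst
    rw [twf_other o s (s+1) (by omega)] at c2
    have := o_succ_eq ms o s (by omega) hws
    rw [this] at c2
    cases hm : ms.getD s true <;> rw [hm] at c2 <;> simp at c2
  · rw [twf_other o t s hst] at c1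
    by_cases hst' : s + 1 = t
    · rw [hst', twf_self] at c2
      have := o_pred_eq ms o t (by omega) ht hwf
      have hs1 : s = t - 1 := by omega
      rw [← hst'] at this
      simp only [Nat.add_sub_cancel] at this
      rw [this] at c1
      cases hm : ms.getD s true <;> rw [hm] at c1 <;> simp at c1
    · rw [twf_other o t (s+1) hst'] at c2
      exact hok s hs ⟨c1, c2⟩

lemma we_ne (k k' : ℕ) (hk : k ≤ ms.length + 1) (hk' : k' ≤ ms.length + 1)
    (hkk : k ≠ k') : we ms o k ≠ we ms o k' := by
  intro h
  have h1 := esum_we ms o k hk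
  rw [h, esum_we ms o k' hk'] at h1
  omega

lemma twist_toFinset (P : Finset Edge) (hio : IsInducedOrientation ms P o)
    (ht : t ≤ ms.length) (hwf : wfst ms o t = tilePos ms t)
    (hws : wsnd ms o (t+1) = NEv (tilePos ms t)) :
    (walkEdgeList ms (twf o t)).toFinset =
      insert (we ms (twf o t) t) (insert (we ms (twf o t) (t+1))
        ((P.erase (we ms o (t+1))).erase (we ms o t))) := by
  ext e
  rw [mem_walk_toFinset]
  simp only [Finset.mem_insert, Finset.mem_erase]
  constructor
  · rintro ⟨k, hk, rfl⟩
    by_cases h1 : k = t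
    · subst h1; left; rfl
    by_cases h2 : k = t + 1
    · subst h2; right; left; rfl
    right; right
    rw [twist_we_other ms o t k h1 h2]
    refine ⟨we_ne ms o k t hk (by omega) h1, we_ne ms o k (t+1) hk (by omega) h2, ?_⟩
    exact we_mem_of_induced ms P o hio k hk
  · rintro (rfl | rfl | ⟨hne1, hne2, heP⟩)
    · exact ⟨t, by omega, rfl⟩
    · exact ⟨t + 1, by omega, rfl⟩
    · rw [hio.2, mem_walk_toFinset] at heP
      obtain ⟨k, hk, rfl⟩ := heP
      have h1 : k ≠ t := fun h => hne1 (by rw [h])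
      have h2 : k ≠ t + 1 := fun h => hne2 (by rw [h])
      exact ⟨k, hk, twist_we_other ms o t k h1 h2⟩

lemma heightSet_twist (ht : t ≤ ms.length) (hmem : ((!(o t)) = true ↔ Even t)) :
    heightSet ms (twf o t) = heightSet ms o ∪ {t} := by
  ext s
  rw [Set.mem_union, Set.mem_singleton_iff, mem_heightSet, mem_heightSet]
  by_cases hst : s = t
  · subst hst
    rw [twf_self]
    constructor
    · intro _; right; rfl
    · intro _; exact ⟨ht, hmem⟩
  · rw [twf_other o t s hst]
    constructor
    · rintro h; exact Or.inl h
    · rintro (h | h)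
      · exact h
      · exact absurd h hst

lemma not_mem_heightSet_of_flip (hmem : ((!(o t)) = true ↔ Even t)) :
    t ∉ heightSet ms o := by
  rintro ⟨-, h⟩
  cases ho : o t <;> rw [ho] at hmem h
  · exact absurd (by simpa using hmem) (by simpa using h)
  · exact absurd (by simpa using h) (by simpa using hmem)

end Twist

lemma heightSet_inj (ms : List Bool) (o o' : ℕ → Bool)
    (hI : heightSet ms o = heightSet ms o') : ∀ t ≤ ms.length, o t = o' t := by
  intro t ht
  have h := Set.ext_iff.1 hI t
  rw [mem_heightSet, mem_heightSet] at h
  by_cases he : Even t <;> cases h1 : o t <;> cases h2 : o' t <;> rw [h1, h2] at h <;> simp_all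

end S12

open S12
/-- `P ↦ h(P)` is a bijection between perfect matchings of a snake graph
and order ideals of the poset of `Q_G`, carrying the positive twist at tile `t` to adding
the element `t` to the ideal. -/
theorem statement12 (ms : List Bool) :
    (∀ P, IsPerfectMatching ms P → ∃! I : Set ℕ, HeightOf ms P I ∧ IsOrderIdealQ ms I) ∧
    (∀ P P' (I : Set ℕ), IsPerfectMatching ms P → IsPerfectMatching ms P' →
      HeightOf ms P I → HeightOf ms P' I → P = P') ∧
    (∀ I : Set ℕ, IsOrderIdealQ ms I → ∃ P, IsPerfectMatching ms P ∧ HeightOf ms P I) ∧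
    (∀ P P' (t : ℕ) (I I' : Set ℕ), IsPerfectMatching ms P → PositiveTwist ms P P' t →
      HeightOf ms P I → HeightOf ms P' I' → t ∉ I ∧ I' = I ∪ {t}) := by
  refine ⟨?_, ?_, ?_, ?_⟩
  · -- part 1 : unique height which is an order ideal
    intro P hP
    have hio := induced_pmo ms P hP
    have hok := VOk_of_induced ms P _ hP.1 hio
    refine ⟨heightSet ms (pmo ms P), ⟨⟨pmo ms P, hio, rfl⟩, ideal_of_VOk ms _ hok⟩, ?_⟩
    rintro J ⟨⟨o'', hio'', rfl⟩, -⟩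
    exact heightSet_congr ms o'' (pmo ms P)
      (fun t ht => orient_unique ms P o'' (pmo ms P) hP hio'' hio t ht)
  · -- part 2 : injectivity
    rintro P P' I hP hP' ⟨o, hio, rfl⟩ ⟨o', hio', hI⟩
    have hoo : ∀ t ≤ ms.length, o t = o' t := heightSet_inj ms o o' hI
    rw [hio.2, hio'.2, walk_congr ms o o' hoo]
  · -- part 3 : surjectivity
    intro I hI
    exact ⟨(walkEdgeList ms (oI I)).toFinset, pm_of_VOk ms _ (VOk_oI ms I hI),
      ⟨oI I, ⟨walk_nodup ms _, rfl⟩, (heightSet_oI ms I hI.1).symm⟩⟩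
  · -- part 4 : positive twists
    rintro P P' t I I' hP htw ⟨o, hio, rfl⟩ ⟨o2, hio2, rfl⟩
    obtain ⟨ht, hcase⟩ := htw
    have hokP := VOk_of_induced ms P o hP.1 hio
    have hx : vsum (tilePos ms t) = (t : ℤ) := vsum_tilePos ms t ht
    rcases hcase with ⟨hev, hN, hS, hP'eq⟩ | ⟨hodd, hW, hE, hP'eq⟩
    · -- even case : N,S → W,E
      rw [eS_eq] at hS
      obtain ⟨hwf, hsnd⟩ := we_eq_extract ms o P hio t (by omega) _ _ hx
        (by rw [vsum_SEv, hx]) hS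
      have hot : o t = false := o_false_of_diagIn_SE ms o t
        (by rw [← wsnd_eq ms o t ht]; exact hsnd)
      rw [eN_eq] at hN
      obtain ⟨hwf2, hws⟩ := we_eq_extract ms o P hio (t+1) (by omega) _ _
        (by rw [vsum_NWv, hx]; push_cast; ring)
        (by rw [vsum_NEv, hx]; push_cast; ring) hN
      have hmem : (!(o t)) = true ↔ Even t := by rw [hot]; simpa using hev
      have ho't : twf o t t = true := by rw [twf_self, hot]; rfl
      have hdo : diagOut ms o t = NWv (tilePos ms t) := by
        rw [diagOut, hot]; simp
      have hdo' : diagOut ms (twf o t) t = SEv (tilePos ms t) := by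
        rw [diagOut, ho't, if_pos rfl]
      have hA : we ms o t = eS (tilePos ms t) := by
        rw [we, hwf, hsnd, eS_eq]
      have hB : we ms o (t+1) = eN (tilePos ms t) := by
        rw [we_succ, hws, hdo, eN_eq]
      have hA' : we ms (twf o t) t = eW (tilePos ms t) := by
        rw [we, twist_wfst ms o t ht hwf, wsnd_eq ms _ t ht, diagIn, ho't, if_pos rfl, eW_eq]
      have hB' : we ms (twf o t) (t+1) = eE (tilePos ms t) := by
        rw [we_succ, twist_wsnd ms o t hws, hdo', eE_eq]
      have hP'2 : P' = (walkEdgeList ms (twf o t)).toFinset := by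
        rw [hP'eq, twist_toFinset ms o t P hio ht hwf hws, hA, hB, hA', hB']
      have hio' : IsInducedOrientation ms P' (twf o t) := ⟨walk_nodup ms _, hP'2⟩
      have hok' : VOk ms (twf o t) := twist_VOk ms o t hokP ht hwf hws
      have hP'pm : IsPerfectMatching ms P' := by rw [hP'2]; exact pm_of_VOk ms _ hok'
      refine ⟨not_mem_heightSet_of_flip ms o t hmem, ?_⟩
      have hou := orient_unique ms P' o2 (twf o t) hP'pm hio2 hio'
      rw [heightSet_congr ms o2 _ hou, heightSet_twist ms o t ht hmem]
    · -- odd case : W,E → N,S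
      rw [eW_eq] at hW
      obtain ⟨hwf, hsnd⟩ := we_eq_extract ms o P hio t (by omega) _ _ hx
        (by rw [vsum_NWv, hx]) hW
      have hot : o t = true := o_true_of_diagIn_NW ms o t
        (by rw [← wsnd_eq ms o t ht]; exact hsnd)
      rw [eE_eq] at hE
      obtain ⟨hwf2, hws⟩ := we_eq_extract ms o P hio (t+1) (by omega) _ _
        (by rw [vsum_SEv, hx]; push_cast; ring)
        (by rw [vsum_NEv, hx]; push_cast; ring) hE
      have hmem : (!(o t)) = true ↔ Even t := by
        rw [hot]; simp [hodd]
      have ho't : twf o t t = false := by rw [twf_self, hot]; rfl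
      have hdo : diagOut ms o t = SEv (tilePos ms t) := by
        rw [diagOut, hot, if_pos rfl]
      have hdo' : diagOut ms (twf o t) t = NWv (tilePos ms t) := by
        rw [diagOut, ho't]; simp
      have hA : we ms o t = eW (tilePos ms t) := by
        rw [we, hwf, hsnd, eW_eq]
      have hB : we ms o (t+1) = eE (tilePos ms t) := by
        rw [we_succ, hws, hdo, eE_eq]
      have hA' : we ms (twf o t) t = eS (tilePos ms t) := by
        rw [we, twist_wfst ms o t ht hwf, wsnd_eq ms _ t ht, diagIn, ho't, eS_eq]
        simp
      have hB' : we ms (twf o t) (t+1) = eN (tilePos ms t) := by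
        rw [we_succ, twist_wsnd ms o t hws, hdo', eN_eq]
      have hP'2 : P' = (walkEdgeList ms (twf o t)).toFinset := by
        rw [hP'eq, twist_toFinset ms o t P hio ht hwf hws, hA, hB, hA', hB',
          Finset.insert_comm, Finset.erase_right_comm]
      have hio' : IsInducedOrientation ms P' (twf o t) := ⟨walk_nodup ms _, hP'2⟩
      have hok' : VOk ms (twf o t) := twist_VOk ms o t hokP ht hwf hws
      have hP'pm : IsPerfectMatching ms P' := by rw [hP'2]; exact pm_of_VOk ms _ hok'
      refine ⟨not_mem_heightSet_of_flip ms o t hmem, ?_⟩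
      have hou := orient_unique ms P' o2 (twf o t) hP'pm hio2 hio'
      rw [heightSet_congr ms o2 _ hou, heightSet_twist ms o t ht hmem]
end

section
/- If P is a perfect matching of a snake graph G = (G_1, ..., G_d) and a positive twist at tile G_j is applicable to P (i.e., P contains both N(G_j) and S(G_j) when j is odd, or both W(G_j) and E(G_j) when j is even), then the result P' of the twist is again a perfect matching of G, and P can be recovered from P' by the inverse twist at G_j. -/
/- ## Auxiliary lemmas for statement 17 -/

lemma tilePos_mem_positions (ms : List Bool) (t : ℕ) (ht : t ≤ ms.length) :
    tilePos ms t ∈ (positions ms).toFinset := by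
  have hlen : (positions ms).length = ms.length + 1 := List.length_scanl
  have ht' : t < (positions ms).length := by omega
  rw [List.mem_toFinset, tilePos, List.getD_eq_getElem _ _ ht']
  exact List.getElem_mem _

lemma tileEdges_subset_snake (ms : List Bool) (p : Vtx)
    (hp : p ∈ (positions ms).toFinset) (e : Edge) (he : e ∈ tileEdges p) :
    e ∈ snakeEdges ms :=
  Finset.mem_biUnion.2 ⟨p, hp, he⟩

lemma tileVerts_subset_snake (ms : List Bool) (p : Vtx)
    (hp : p ∈ (positions ms).toFinset) (v : Vtx) (hv : v ∈ tileVerts p) :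
    v ∈ snakeVerts ms :=
  Finset.mem_biUnion.2 ⟨p, hp, hv⟩

lemma edge_distinct (p : Vtx) :
    eN p ≠ eS p ∧ eN p ≠ eW p ∧ eN p ≠ eE p ∧ eS p ≠ eW p ∧ eS p ≠ eE p ∧
      eW p ≠ eE p := by
  obtain ⟨x, y⟩ := p
  simp only [eN, eS, eW, eE, Sym2.eq_iff, Prod.mk.injEq, ne_eq]
  refine ⟨?_, ?_, ?_, ?_, ?_, ?_⟩ <;> omega

lemma edge_cover (p : Vtx) (v : Vtx) :
    (v ∈ eN p ∨ v ∈ eS p) ↔ (v ∈ eW p ∨ v ∈ eE p) := by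
  obtain ⟨x, y⟩ := p; obtain ⟨a, b⟩ := v
  simp only [eN, eS, eW, eE, Sym2.mem_iff, Prod.mk.injEq]
  omega

lemma edge_NS_disj (p : Vtx) (v : Vtx) (h1 : v ∈ eN p) (h2 : v ∈ eS p) : False := by
  obtain ⟨x, y⟩ := p; obtain ⟨a, b⟩ := v
  simp only [eN, eS, Sym2.mem_iff, Prod.mk.injEq] at h1 h2
  omega

lemma edge_WE_disj (p : Vtx) (v : Vtx) (h1 : v ∈ eW p) (h2 : v ∈ eE p) : False := by
  obtain ⟨x, y⟩ := p; obtain ⟨a, b⟩ := v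
  simp only [eW, eE, Sym2.mem_iff, Prod.mk.injEq] at h1 h2
  omega

lemma edge_vert_tile (p : Vtx) (v : Vtx) (h : v ∈ eW p ∨ v ∈ eE p) :
    v ∈ tileVerts p := by
  obtain ⟨x, y⟩ := p; obtain ⟨a, b⟩ := v
  simp only [eW, eE, Sym2.mem_iff, Prod.mk.injEq] at h
  simp only [tileVerts, Finset.mem_insert, Finset.mem_singleton, Prod.mk.injEq]
  omega

/-- The core swap lemma: replacing the pair `{a, b}` of a perfect matching by a pair
`{c, d}` covering the same vertices yields a perfect matching, with `c, d ∉ P`. -/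
lemma swap_pm (ms : List Bool) (P : Finset Edge) (hP : IsPerfectMatching ms P)
    (a b c d : Edge) (vc vd : Vtx)
    (hcs : c ∈ snakeEdges ms) (hds : d ∈ snakeEdges ms)
    (hca : c ≠ a) (hcb : c ≠ b) (hda : d ≠ a) (hdb : d ≠ b)
    (hcover : ∀ v, (v ∈ a ∨ v ∈ b) ↔ (v ∈ c ∨ v ∈ d))
    (hcd' : ∀ v, v ∈ c → v ∈ d → False)
    (hsv : ∀ v, (v ∈ c ∨ v ∈ d) → v ∈ snakeVerts ms)
    (hvc : vc ∈ c) (hvd : vd ∈ d)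
    (haP : a ∈ P) (hbP : b ∈ P) :
    IsPerfectMatching ms (insert c (insert d ((P.erase a).erase b))) ∧
      c ∉ P ∧ d ∉ P := by
  obtain ⟨hsub, huniq⟩ := hP
  have mem' : ∀ e, e ∈ insert c (insert d ((P.erase a).erase b)) ↔
      e = c ∨ e = d ∨ (e ≠ b ∧ e ≠ a ∧ e ∈ P) := by
    intro e
    simp [Finset.mem_insert, Finset.mem_erase, and_assoc]
  have hcP : c ∉ P := by
    intro hc
    have hv : vc ∈ snakeVerts ms := hsv vc (Or.inl hvc)
    obtain ⟨e₀, _, hu⟩ := huniq vc hv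
    rcases (hcover vc).2 (Or.inl hvc) with h1 | h1
    · exact hca ((hu c ⟨hc, hvc⟩).trans (hu a ⟨haP, h1⟩).symm)
    · exact hcb ((hu c ⟨hc, hvc⟩).trans (hu b ⟨hbP, h1⟩).symm)
  have hdP : d ∉ P := by
    intro hd
    have hv : vd ∈ snakeVerts ms := hsv vd (Or.inr hvd)
    obtain ⟨e₀, _, hu⟩ := huniq vd hv
    rcases (hcover vd).2 (Or.inr hvd) with h1 | h1
    · exact hda ((hu d ⟨hd, hvd⟩).trans (hu a ⟨haP, h1⟩).symm)
    · exact hdb ((hu d ⟨hd, hvd⟩).trans (hu b ⟨hbP, h1⟩).symm)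
  refine ⟨⟨?_, ?_⟩, hcP, hdP⟩
  · intro e he
    rcases (mem' e).1 he with rfl | rfl | ⟨_, _, heP⟩
    · exact hcs
    · exact hds
    · exact hsub heP
  · intro v hv
    by_cases hvcd : v ∈ c ∨ v ∈ d
    · rcases hvcd with hvc' | hvd'
      · refine ⟨c, ⟨(mem' c).2 (Or.inl rfl), hvc'⟩, ?_⟩
        rintro e ⟨he, hve⟩
        rcases (mem' e).1 he with rfl | rfl | ⟨hneb, hnea, heP⟩
        · rfl
        · exact (hcd' v hvc' hve).elim
        · obtain ⟨e₀, _, hu⟩ := huniq v hv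
          rcases (hcover v).2 (Or.inl hvc') with h1 | h1
          · exact absurd ((hu e ⟨heP, hve⟩).trans (hu a ⟨haP, h1⟩).symm) hnea
          · exact absurd ((hu e ⟨heP, hve⟩).trans (hu b ⟨hbP, h1⟩).symm) hneb
      · refine ⟨d, ⟨(mem' d).2 (Or.inr (Or.inl rfl)), hvd'⟩, ?_⟩
        rintro e ⟨he, hve⟩
        rcases (mem' e).1 he with rfl | rfl | ⟨hneb, hnea, heP⟩
        · exact (hcd' v hve hvd').elim
        · rfl
        · obtain ⟨e₀, _, hu⟩ := huniq v hv
          rcases (hcover v).2 (Or.inr hvd') with h1 | h1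
          · exact absurd ((hu e ⟨heP, hve⟩).trans (hu a ⟨haP, h1⟩).symm) hnea
          · exact absurd ((hu e ⟨heP, hve⟩).trans (hu b ⟨hbP, h1⟩).symm) hneb
    · push_neg at hvcd
      have hva : v ∉ a := fun h => by
        rcases (hcover v).1 (Or.inl h) with h' | h'
        exacts [hvcd.1 h', hvcd.2 h']
      have hvb : v ∉ b := fun h => by
        rcases (hcover v).1 (Or.inr h) with h' | h'
        exacts [hvcd.1 h', hvcd.2 h']
      obtain ⟨e₀, ⟨he₀P, hve₀⟩, hu⟩ := huniq v hv
      have hne₀a : e₀ ≠ a := fun h => hva (h ▸ hve₀)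
      have hne₀b : e₀ ≠ b := fun h => hvb (h ▸ hve₀)
      refine ⟨e₀, ⟨(mem' e₀).2 (Or.inr (Or.inr ⟨hne₀b, hne₀a, he₀P⟩)), hve₀⟩, ?_⟩
      rintro e ⟨he, hve⟩
      rcases (mem' e).1 he with rfl | rfl | ⟨_, _, heP⟩
      · exact absurd hve hvcd.1
      · exact absurd hve hvcd.2
      · exact hu e ⟨heP, hve⟩

lemma recover_pm (P : Finset Edge) (a b c d : Edge)
    (hca : c ≠ a) (hcb : c ≠ b) (hda : d ≠ a) (hdb : d ≠ b) (hcd : c ≠ d)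
    (haP : a ∈ P) (hbP : b ∈ P) (hcP : c ∉ P) (hdP : d ∉ P) :
    insert a (insert b
      (((insert c (insert d ((P.erase a).erase b))).erase c).erase d)) = P := by
  ext e
  simp only [Finset.mem_insert, Finset.mem_erase, ne_eq]
  by_cases h1 : e = a <;> by_cases h2 : e = b <;> by_cases h3 : e = c <;>
    by_cases h4 : e = d <;> subst_vars <;> simp_all

/-- if a positive twist at tile `t` is applicable to a perfect matching `P`,
then its result `P'` is again a perfect matching, and `P` is recovered from `P'` by the
inverse twist at `t`. -/
theorem statement17 (ms : List Bool) (P P' : Finset Edge) (t : ℕ)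
    (hP : IsPerfectMatching ms P) (h : PositiveTwist ms P P' t) :
    IsPerfectMatching ms P' ∧
    (Even t → insert (eN (tilePos ms t)) (insert (eS (tilePos ms t))
      ((P'.erase (eW (tilePos ms t))).erase (eE (tilePos ms t)))) = P) ∧
    (¬Even t → insert (eW (tilePos ms t)) (insert (eE (tilePos ms t))
      ((P'.erase (eN (tilePos ms t))).erase (eS (tilePos ms t)))) = P) := by
  obtain ⟨ht, hcase⟩ := h
  set p := tilePos ms t with hp
  have hpm : p ∈ (positions ms).toFinset := tilePos_mem_positions ms t ht
  obtain ⟨hNS, hNW, hNE, hSW, hSE, hWE⟩ := edge_distinct p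
  have hte : ∀ e ∈ tileEdges p, e ∈ snakeEdges ms := tileEdges_subset_snake ms p hpm
  have hNm : eN p ∈ snakeEdges ms := hte _ (by simp [tileEdges])
  have hSm : eS p ∈ snakeEdges ms := hte _ (by simp [tileEdges])
  have hWm : eW p ∈ snakeEdges ms := hte _ (by simp [tileEdges])
  have hEm : eE p ∈ snakeEdges ms := hte _ (by simp [tileEdges])
  have hsvWE : ∀ v, (v ∈ eW p ∨ v ∈ eE p) → v ∈ snakeVerts ms := fun v hv =>
    tileVerts_subset_snake ms p hpm v (edge_vert_tile p v hv)
  have hsvNS : ∀ v, (v ∈ eN p ∨ v ∈ eS p) → v ∈ snakeVerts ms := fun v hv =>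
    hsvWE v ((edge_cover p v).1 hv)
  rcases hcase with ⟨hEv, hN, hS, hP'⟩ | ⟨hEv, hW, hE, hP'⟩
  · obtain ⟨hpm', hcP, hdP⟩ := swap_pm ms P hP (eN p) (eS p) (eW p) (eE p)
      p (p.1 + 1, p.2) hWm hEm hNW.symm hSW.symm hNE.symm hSE.symm
      (edge_cover p) (edge_WE_disj p) hsvWE (by simp [eW]) (by simp [eE]) hN hS
    refine ⟨hP' ▸ hpm', fun _ => ?_, fun h' => absurd hEv h'⟩
    rw [hP']
    exact recover_pm P (eN p) (eS p) (eW p) (eE p) hNW.symm hSW.symm hNE.symm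
      hSE.symm hWE hN hS hcP hdP
  · obtain ⟨hpm', hcP, hdP⟩ := swap_pm ms P hP (eW p) (eE p) (eN p) (eS p)
      (p.1, p.2 + 1) p hNm hSm hNW hNE hSW hSE
      (fun v => (edge_cover p v).symm) (edge_NS_disj p) hsvNS
      (by simp [eN]) (by simp [eS]) hW hE
    refine ⟨hP' ▸ hpm', fun h' => absurd h' hEv, fun _ => ?_⟩
    rw [hP']
    exact recover_pm P (eW p) (eE p) (eN p) (eS p) hNW hNE hSW hSE hNS
      hW hE hcP hdP
end

section
/- A snake graph has exactly two perfect matchings consisting entirely of boundary edges. -/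
/- ## Auxiliary: generalized snake graphs -/

namespace Snake18

def gpos (p : Vtx) (ms : List Bool) : List Vtx := ms.scanl mv p

def gVerts (p : Vtx) (ms : List Bool) : Finset Vtx := (gpos p ms).toFinset.biUnion tileVerts
def gEdges (p : Vtx) (ms : List Bool) : Finset Edge := (gpos p ms).toFinset.biUnion tileEdges

def gBdry (p : Vtx) (ms : List Bool) (e : Edge) : Prop :=
  ((gpos p ms).toFinset.filter (fun q => e ∈ tileEdges q)).card = 1

def gPM (p : Vtx) (ms : List Bool) (P : Finset Edge) : Prop :=
  P ⊆ gEdges p ms ∧ ∀ v ∈ gVerts p ms, ∃! e, e ∈ P ∧ v ∈ e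

def BPM (p : Vtx) (ms : List Bool) : Set (Finset Edge) :=
  {P | gPM p ms P ∧ ∀ e ∈ P, gBdry p ms e}

lemma gpos_nil (p : Vtx) : gpos p [] = [p] := rfl
lemma gpos_cons (p : Vtx) (m : Bool) (ms : List Bool) :
    gpos p (m :: ms) = p :: gpos (mv p m) ms := by
  simp only [gpos, List.scanl_cons]

def wt (v : Vtx) : ℤ := v.1 + v.2

lemma wt_mv (p : Vtx) (m : Bool) : wt (mv p m) = wt p + 1 := by
  cases m <;> simp [mv, wt] <;> ring

lemma mem_gpos_wt {p q : Vtx} {ms : List Bool} (h : q ∈ gpos p ms) : wt p ≤ wt q := by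
  induction ms generalizing p with
  | nil => simp [gpos_nil] at h; simp [h]
  | cons m ms ih =>
    rw [gpos_cons] at h
    rcases List.mem_cons.mp h with h | h
    · simp [h]
    · have := ih h; rw [wt_mv] at this; omega

lemma mem_tileVerts_wt {v q : Vtx} (h : v ∈ tileVerts q) : wt q ≤ wt v := by
  simp only [tileVerts, Finset.mem_insert, Finset.mem_singleton] at h
  rcases h with h | h | h | h <;> subst h <;> simp [wt] <;> omega

lemma tileEdge_verts {e : Edge} {q : Vtx} (h : e ∈ tileEdges q) :
    ∀ v ∈ e, v ∈ tileVerts q := by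
  simp only [tileEdges, Finset.mem_insert, Finset.mem_singleton] at h
  intro v hv
  rcases h with h | h | h | h <;> subst h <;>
    simp only [eS, eW, eN, eE, Sym2.mem_iff] at hv <;>
    rcases hv with hv | hv <;> subst hv <;> simp [tileVerts]

lemma edge_vert_mem {e : Edge} {p : Vtx} {ms : List Bool} (h : e ∈ gEdges p ms)
    {v : Vtx} (hv : v ∈ e) : v ∈ gVerts p ms := by
  simp only [gEdges, Finset.mem_biUnion] at h
  obtain ⟨q, hq, he⟩ := h
  exact Finset.mem_biUnion.mpr ⟨q, hq, tileEdge_verts he v hv⟩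

lemma not_mem_gVerts_of_wt {v p : Vtx} {ms : List Bool} (h : wt v < wt p) :
    v ∉ gVerts p ms := by
  intro hv
  simp only [gVerts, Finset.mem_biUnion] at hv
  obtain ⟨q, hq, hvq⟩ := hv
  have := mem_gpos_wt (by simpa using hq)
  have := mem_tileVerts_wt hvq
  omega

lemma gBdry_mem_gEdges {p : Vtx} {ms : List Bool} {e : Edge} (h : gBdry p ms e) :
    e ∈ gEdges p ms := by
  have : ((gpos p ms).toFinset.filter (fun q => e ∈ tileEdges q)).Nonempty := by
    rw [← Finset.card_pos, h]; norm_num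
  obtain ⟨q, hq⟩ := this
  rw [Finset.mem_filter] at hq
  exact Finset.mem_biUnion.mpr ⟨q, hq.1, hq.2⟩

end Snake18

namespace Snake18

lemma ne_of_mem_not_mem {e f : Edge} {v : Vtx} (h1 : v ∈ e) (h2 : v ∉ f) : e ≠ f :=
  fun h => h2 (h ▸ h1)

lemma eSne_eW (p : Vtx) : eS p ≠ eW p :=
  ne_of_mem_not_mem (v := (p.1 + 1, p.2)) (by simp [eS])
    (by simp only [eW, Sym2.mem_iff, Prod.ext_iff]; omega)
lemma eSne_eN (p : Vtx) : eS p ≠ eN p :=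
  ne_of_mem_not_mem (v := p) (by simp [eS])
    (by simp only [eN, Sym2.mem_iff, Prod.ext_iff]; omega)
lemma eSne_eE (p : Vtx) : eS p ≠ eE p :=
  ne_of_mem_not_mem (v := p) (by simp [eS])
    (by simp only [eE, Sym2.mem_iff, Prod.ext_iff]; omega)
lemma eWne_eN (p : Vtx) : eW p ≠ eN p :=
  ne_of_mem_not_mem (v := p) (by simp [eW])
    (by simp only [eN, Sym2.mem_iff, Prod.ext_iff]; omega)
lemma eWne_eE (p : Vtx) : eW p ≠ eE p :=
  ne_of_mem_not_mem (v := p) (by simp [eW])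
    (by simp only [eE, Sym2.mem_iff, Prod.ext_iff]; omega)
lemma eNne_eE (p : Vtx) : eN p ≠ eE p :=
  ne_of_mem_not_mem (v := (p.1, p.2 + 1)) (by simp [eN])
    (by simp only [eE, Sym2.mem_iff, Prod.ext_iff]; omega)

lemma mem_eS (p : Vtx) : p ∈ eS p := by simp [eS]
lemma mem_eW (p : Vtx) : p ∈ eW p := by simp [eW]
lemma not_mem_eN (p : Vtx) : p ∉ eN p := by
  simp only [eN, Sym2.mem_iff, Prod.ext_iff]; omega
lemma not_mem_eE (p : Vtx) : p ∉ eE p := by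
  simp only [eE, Sym2.mem_iff, Prod.ext_iff]; omega

lemma gVerts_nil (p : Vtx) : gVerts p [] = tileVerts p := by
  simp [gVerts, gpos]
lemma gEdges_nil (p : Vtx) : gEdges p [] = tileEdges p := by
  simp [gEdges, gpos]

lemma square_pm (p : Vtx) {P : Finset Edge} (hsub : P ⊆ tileEdges p)
    (hpm : ∀ v ∈ tileVerts p, ∃! e, e ∈ P ∧ v ∈ e) :
    P = {eS p, eN p} ∨ P = {eW p, eE p} := by
  have hA : p ∈ tileVerts p := by simp [tileVerts]
  have hB : ((p.1 + 1, p.2) : Vtx) ∈ tileVerts p := by simp [tileVerts]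
  have hC : ((p.1, p.2 + 1) : Vtx) ∈ tileVerts p := by simp [tileVerts]
  have hD : ((p.1 + 1, p.2 + 1) : Vtx) ∈ tileVerts p := by simp [tileVerts]
  obtain ⟨e₁, ⟨he₁P, he₁p⟩, he₁u⟩ := hpm p hA
  have he₁ : e₁ = eS p ∨ e₁ = eW p := by
    have := hsub he₁P
    simp only [tileEdges, Finset.mem_insert, Finset.mem_singleton] at this
    rcases this with h | h | h | h
    · exact Or.inl h
    · exact Or.inr h
    · exact absurd (h ▸ he₁p) (not_mem_eN p)
    · exact absurd (h ▸ he₁p) (not_mem_eE p)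
  rcases he₁ with h | h
  · left
    subst h
    have hWnot : eW p ∉ P := fun hW =>
      eSne_eW p (he₁u (eW p) ⟨hW, mem_eW p⟩).symm
    have hN : eN p ∈ P := by
      obtain ⟨e₂, ⟨he₂P, he₂p⟩, _⟩ := hpm _ hC
      have := hsub he₂P
      simp only [tileEdges, Finset.mem_insert, Finset.mem_singleton] at this
      rcases this with h | h | h | h
      · subst h; exact absurd he₂p (by simp only [eS, Sym2.mem_iff, Prod.ext_iff]; omega)
      · subst h; exact absurd he₂P hWnot
      · subst h; exact he₂P
      · subst h; exact absurd he₂p (by simp only [eE, Sym2.mem_iff, Prod.ext_iff]; omega)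
    have hEnot : eE p ∉ P := by
      intro hE
      obtain ⟨e₂, _, he₂u⟩ := hpm _ hB
      have h1 := he₂u (eS p) ⟨he₁P, by simp [eS]⟩
      have h2 := he₂u (eE p) ⟨hE, by simp [eE]⟩
      exact eSne_eE p (h1.trans h2.symm)
    ext e
    simp only [Finset.mem_insert, Finset.mem_singleton]
    constructor
    · intro heP
      have := hsub heP
      simp only [tileEdges, Finset.mem_insert, Finset.mem_singleton] at this
      rcases this with h | h | h | h
      · exact Or.inl h
      · exact absurd (h ▸ heP) hWnot
      · exact Or.inr h
      · exact absurd (h ▸ heP) hEnot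
    · rintro (h | h) <;> subst h
      · exact he₁P
      · exact hN
  · right
    subst h
    have hSnot : eS p ∉ P := fun hS =>
      eSne_eW p (he₁u (eS p) ⟨hS, mem_eS p⟩)
    have hE : eE p ∈ P := by
      obtain ⟨e₂, ⟨he₂P, he₂p⟩, _⟩ := hpm _ hB
      have := hsub he₂P
      simp only [tileEdges, Finset.mem_insert, Finset.mem_singleton] at this
      rcases this with h | h | h | h
      · subst h; exact absurd he₂P hSnot
      · subst h; exact absurd he₂p (by simp only [eW, Sym2.mem_iff, Prod.ext_iff]; omega)
      · subst h; exact absurd he₂p (by simp only [eN, Sym2.mem_iff, Prod.ext_iff]; omega)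
      · subst h; exact he₂P
    have hNnot : eN p ∉ P := by
      intro hN
      obtain ⟨e₂, _, he₂u⟩ := hpm _ hC
      have h1 := he₂u (eW p) ⟨he₁P, by simp [eW]⟩
      have h2 := he₂u (eN p) ⟨hN, by simp [eN]⟩
      exact eWne_eN p (h1.trans h2.symm)
    ext e
    simp only [Finset.mem_insert, Finset.mem_singleton]
    constructor
    · intro heP
      have := hsub heP
      simp only [tileEdges, Finset.mem_insert, Finset.mem_singleton] at this
      rcases this with h | h | h | h
      · exact absurd (h ▸ heP) hSnot
      · exact Or.inl h
      · exact absurd (h ▸ heP) hNnot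
      · exact Or.inr h
    · rintro (h | h) <;> subst h
      · exact he₁P
      · exact hE

end Snake18

namespace Snake18

lemma mem_gpos_cases {p q : Vtx} {ms : List Bool} (h : q ∈ gpos p ms) :
    q = p ∨ wt p + 1 ≤ wt q := by
  induction ms generalizing p with
  | nil => simp [gpos_nil] at h; exact Or.inl h
  | cons m ms ih =>
    rw [gpos_cons] at h
    rcases List.mem_cons.mp h with h | h
    · exact Or.inl h
    · rcases ih h with rfl | h2
      · right; rw [wt_mv]
      · right; rw [wt_mv] at h2; omega

lemma self_mem_gpos (p : Vtx) (ms : List Bool) : p ∈ gpos p ms := by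
  cases ms <;> simp [gpos_nil, gpos_cons]

lemma mem_gVerts_cases {w p : Vtx} {ms : List Bool} (h : w ∈ gVerts p ms) :
    w ∈ tileVerts p ∨ wt p + 1 ≤ wt w := by
  simp only [gVerts, Finset.mem_biUnion] at h
  obtain ⟨q, hq, hw⟩ := h
  rcases mem_gpos_cases (List.mem_toFinset.mp hq) with rfl | h2
  · exact Or.inl hw
  · exact Or.inr (le_trans h2 (mem_tileVerts_wt hw))

lemma not_mem_tileEdges_of_lt {e : Edge} {q v : Vtx} (hv : v ∈ e) (hw : wt v < wt q) :
    e ∉ tileEdges q := fun h =>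
  absurd (mem_tileVerts_wt (tileEdge_verts h v hv)) (by omega)

lemma eu_left {e f : Edge} {v : Vtx} (h1 : v ∈ e) (h2 : v ∉ f) :
    ∃! g, g ∈ ({e, f} : Finset Edge) ∧ v ∈ g := by
  refine ⟨e, ⟨by simp, h1⟩, ?_⟩
  rintro g ⟨hg, hvg⟩
  rcases Finset.mem_insert.mp hg with rfl | hg
  · rfl
  · rw [Finset.mem_singleton] at hg; subst hg; exact absurd hvg h2

lemma eu_right {e f : Edge} {v : Vtx} (h1 : v ∉ e) (h2 : v ∈ f) :
    ∃! g, g ∈ ({e, f} : Finset Edge) ∧ v ∈ g := by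
  refine ⟨f, ⟨by simp, h2⟩, ?_⟩
  rintro g ⟨hg, hvg⟩
  rcases Finset.mem_insert.mp hg with rfl | hg
  · exact absurd hvg h1
  · rw [Finset.mem_singleton] at hg; subst hg; rfl

lemma gBdry_nil (p : Vtx) (e : Edge) : gBdry p [] e ↔ e ∈ tileEdges p := by
  unfold gBdry
  rw [gpos_nil]
  simp [Finset.filter_singleton]
  split <;> simp_all

lemma pm_SN (p : Vtx) (w : Vtx) (hw : w ∈ tileVerts p) :
    ∃! e, e ∈ ({eS p, eN p} : Finset Edge) ∧ w ∈ e := by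
  simp only [tileVerts, Finset.mem_insert, Finset.mem_singleton] at hw
  rcases hw with rfl | rfl | rfl | rfl
  · exact eu_left (mem_eS w) (not_mem_eN w)
  · exact eu_left (by simp [eS]) (by simp only [eN, Sym2.mem_iff, Prod.ext_iff]; omega)
  · exact eu_right (by simp only [eS, Sym2.mem_iff, Prod.ext_iff]; omega) (by simp [eN])
  · exact eu_right (by simp only [eS, Sym2.mem_iff, Prod.ext_iff]; omega) (by simp [eN])

lemma pm_WE (p : Vtx) (w : Vtx) (hw : w ∈ tileVerts p) :
    ∃! e, e ∈ ({eW p, eE p} : Finset Edge) ∧ w ∈ e := by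
  simp only [tileVerts, Finset.mem_insert, Finset.mem_singleton] at hw
  rcases hw with rfl | rfl | rfl | rfl
  · exact eu_left (mem_eW w) (not_mem_eE w)
  · exact eu_right (by simp only [eW, Sym2.mem_iff, Prod.ext_iff]; omega) (by simp [eE])
  · exact eu_left (by simp [eW]) (by simp only [eE, Sym2.mem_iff, Prod.ext_iff]; omega)
  · exact eu_right (by simp only [eW, Sym2.mem_iff, Prod.ext_iff]; omega) (by simp [eE])

lemma BPM_nil (p : Vtx) :
    BPM p [] = {({eS p, eN p} : Finset Edge), {eW p, eE p}} := by
  ext P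
  simp only [BPM, Set.mem_setOf_eq, Set.mem_insert_iff, Set.mem_singleton_iff]
  constructor
  · rintro ⟨⟨hsub, hpm⟩, _⟩
    exact square_pm p (by rwa [gEdges_nil] at hsub)
      (fun v hv => hpm v (by rwa [gVerts_nil]))
  · rintro (rfl | rfl)
    · refine ⟨⟨?_, ?_⟩, ?_⟩
      · rw [gEdges_nil]
        intro e he
        rcases Finset.mem_insert.mp he with rfl | he
        · simp [tileEdges]
        · rw [Finset.mem_singleton] at he; subst he; simp [tileEdges]
      · intro v hv; rw [gVerts_nil] at hv; exact pm_SN p v hv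
      · intro e he
        rw [gBdry_nil]
        rcases Finset.mem_insert.mp he with rfl | he
        · simp [tileEdges]
        · rw [Finset.mem_singleton] at he; subst he; simp [tileEdges]
    · refine ⟨⟨?_, ?_⟩, ?_⟩
      · rw [gEdges_nil]
        intro e he
        rcases Finset.mem_insert.mp he with rfl | he
        · simp [tileEdges]
        · rw [Finset.mem_singleton] at he; subst he; simp [tileEdges]
      · intro v hv; rw [gVerts_nil] at hv; exact pm_WE p v hv
      · intro e he
        rw [gBdry_nil]
        rcases Finset.mem_insert.mp he with rfl | he
        · simp [tileEdges]
        · rw [Finset.mem_singleton] at he; subst he; simp [tileEdges]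

lemma pair_ne (p : Vtx) : ({eS p, eN p} : Finset Edge) ≠ {eW p, eE p} := by
  intro h
  have : eS p ∈ ({eW p, eE p} : Finset Edge) := h ▸ (by simp)
  rcases Finset.mem_insert.mp this with h' | h'
  · exact eSne_eW p h'
  · rw [Finset.mem_singleton] at h'; exact eSne_eE p h'

end Snake18

namespace Snake18

lemma step_aux (p : Vtx) (m : Bool) (ms : List Bool)
    (a b c d : Vtx) (o g u v : Edge)
    (ho : o = s(a, c)) (hg : g = s(b, d)) (hu : u = s(a, b)) (hv : v = s(c, d))
    (hab : a ≠ b) (hac : a ≠ c) (had : a ≠ d) (hbc : b ≠ c) (hbd : b ≠ d) (hcd : c ≠ d)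
    (htile : tileEdges p = {o, g, u, v})
    (hverts : tileVerts p = {a, b, c, d})
    (hanot : a ∉ gVerts (mv p m) ms) (hcnot : c ∉ gVerts (mv p m) ms)
    (hgmem : g ∈ tileEdges (mv p m))
    (honot : ∀ q ∈ gpos (mv p m) ms, o ∉ tileEdges q)
    (hunot : ∀ q ∈ gpos (mv p m) ms, u ∉ tileEdges q)
    (hvnot : ∀ q ∈ gpos (mv p m) ms, v ∉ tileEdges q)
    (hgonly : ∀ q ∈ gpos (mv p m) ms, g ∈ tileEdges q → q = mv p m)
    (hpnot : p ∉ gpos (mv p m) ms) :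
    (BPM p (m :: ms)).ncard = (BPM (mv p m) ms).ncard := by
  -- vertex/edge membership table
  have hmo : ∀ w, w ∈ o → w = a ∨ w = c := fun w hw => Sym2.mem_iff.mp (ho ▸ hw)
  have hmg : ∀ w, w ∈ g → w = b ∨ w = d := fun w hw => Sym2.mem_iff.mp (hg ▸ hw)
  have hmu : ∀ w, w ∈ u → w = a ∨ w = b := fun w hw => Sym2.mem_iff.mp (hu ▸ hw)
  have hmv : ∀ w, w ∈ v → w = c ∨ w = d := fun w hw => Sym2.mem_iff.mp (hv ▸ hw)
  have hao : a ∈ o := ho ▸ Sym2.mem_mk_left a c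
  have hco : c ∈ o := ho ▸ Sym2.mem_mk_right a c
  have hau : a ∈ u := hu ▸ Sym2.mem_mk_left a b
  have hbu : b ∈ u := hu ▸ Sym2.mem_mk_right a b
  have hcv : c ∈ v := hv ▸ Sym2.mem_mk_left c d
  have hdv : d ∈ v := hv ▸ Sym2.mem_mk_right c d
  have hbg : b ∈ g := hg ▸ Sym2.mem_mk_left b d
  have hdg : d ∈ g := hg ▸ Sym2.mem_mk_right b d
  have hag : a ∉ g := fun h => (hmg a h).elim hab had
  have hav : a ∉ v := fun h => (hmv a h).elim hac had
  have hbo : b ∉ o := fun h => (hmo b h).elim (fun h' => hab h'.symm) hbc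
  have hbv : b ∉ v := fun h => (hmv b h).elim hbc hbd
  have hcu : c ∉ u := fun h => (hmu c h).elim (fun h' => hac h'.symm) (fun h' => hbc h'.symm)
  have hcg : c ∉ g := fun h => (hmg c h).elim (fun h' => hbc h'.symm) hcd
  have hdo : d ∉ o := fun h => (hmo d h).elim (fun h' => had h'.symm) (fun h' => hcd h'.symm)
  have hdu : d ∉ u := fun h => (hmu d h).elim (fun h' => had h'.symm) (fun h' => hbd h'.symm)
  -- edge distinctness
  have hog : o ≠ g := ne_of_mem_not_mem hao hag
  have hou : o ≠ u := ne_of_mem_not_mem hco hcu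
  have hov : o ≠ v := ne_of_mem_not_mem hao hav
  have huv : u ≠ v := ne_of_mem_not_mem hau hav
  have hug : u ≠ g := ne_of_mem_not_mem hau hag
  have hvg : v ≠ g := ne_of_mem_not_mem hcv hcg
  -- facts about the sub snake
  have hsubE_o : o ∉ gEdges (mv p m) ms := by
    intro h
    simp only [gEdges, Finset.mem_biUnion] at h
    obtain ⟨q, hq, h⟩ := h
    exact honot q (List.mem_toFinset.mp hq) h
  have hsubE_u : u ∉ gEdges (mv p m) ms := by
    intro h
    simp only [gEdges, Finset.mem_biUnion] at h
    obtain ⟨q, hq, h⟩ := h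
    exact hunot q (List.mem_toFinset.mp hq) h
  have hsubE_v : v ∉ gEdges (mv p m) ms := by
    intro h
    simp only [gEdges, Finset.mem_biUnion] at h
    obtain ⟨q, hq, h⟩ := h
    exact hvnot q (List.mem_toFinset.mp hq) h
  have hgE : g ∈ gEdges (mv p m) ms :=
    Finset.mem_biUnion.mpr ⟨mv p m, List.mem_toFinset.mpr (self_mem_gpos _ _), hgmem⟩
  have hbsub : b ∈ gVerts (mv p m) ms := edge_vert_mem hgE hbg
  have hdsub : d ∈ gVerts (mv p m) ms := edge_vert_mem hgE hdg
  have hpp' : p ≠ mv p m := fun h => hpnot (h ▸ self_mem_gpos (mv p m) ms)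
  have hpFin : p ∉ (gpos (mv p m) ms).toFinset := fun h => hpnot (List.mem_toFinset.mp h)
  have hfiltg : (gpos (mv p m) ms).toFinset.filter (fun q => g ∈ tileEdges q) = {mv p m} := by
    ext q
    simp only [Finset.mem_filter, Finset.mem_singleton, List.mem_toFinset]
    constructor
    · rintro ⟨hq, hmemq⟩; exact hgonly q hq hmemq
    · rintro rfl; exact ⟨self_mem_gpos _ _, hgmem⟩
  have hgbdry : gBdry (mv p m) ms g := by
    unfold gBdry; rw [hfiltg]; simp
  -- the big snake: vertices, edges, boundary
  have hbigV : gVerts p (m :: ms) = tileVerts p ∪ gVerts (mv p m) ms := by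
    unfold gVerts
    rw [gpos_cons, List.toFinset_cons, Finset.biUnion_insert]
  have hbigE : gEdges p (m :: ms) = tileEdges p ∪ gEdges (mv p m) ms := by
    unfold gEdges
    rw [gpos_cons, List.toFinset_cons, Finset.biUnion_insert]
  have hbig_bdry : ∀ e : Edge, gBdry p (m :: ms) e ↔
      ((e = o ∨ e = u ∨ e = v) ∨ (gBdry (mv p m) ms e ∧ e ≠ g)) := by
    intro e
    unfold gBdry
    rw [gpos_cons, List.toFinset_cons, Finset.filter_insert]
    by_cases hep : e ∈ tileEdges p
    · rw [if_pos hep]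
      rw [htile] at hep
      simp only [Finset.mem_insert, Finset.mem_singleton] at hep
      rcases hep with rfl | rfl | rfl | rfl
      · have hf : (gpos (mv p m) ms).toFinset.filter (fun q => e ∈ tileEdges q) = ∅ :=
          Finset.filter_eq_empty_iff.mpr (fun {q} hq => honot q (List.mem_toFinset.mp hq))
        rw [hf]
        simp
      · have hL : ¬((insert p ((gpos (mv p m) ms).toFinset.filter
            (fun q => e ∈ tileEdges q))).card = 1) := by
          rw [hfiltg, Finset.card_insert_of_notMem (by simp [hpp'])]
          simp
        refine iff_of_false hL ?_
        rintro ((h | h | h) | ⟨_, hne⟩)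
        exacts [hog h.symm, hug h.symm, hvg h.symm, hne rfl]
      · have hf : (gpos (mv p m) ms).toFinset.filter (fun q => e ∈ tileEdges q) = ∅ :=
          Finset.filter_eq_empty_iff.mpr (fun {q} hq => hunot q (List.mem_toFinset.mp hq))
        rw [hf]
        simp
      · have hf : (gpos (mv p m) ms).toFinset.filter (fun q => e ∈ tileEdges q) = ∅ :=
          Finset.filter_eq_empty_iff.mpr (fun {q} hq => hvnot q (List.mem_toFinset.mp hq))
        rw [hf]
        simp
    · rw [if_neg hep]
      have heo : e ≠ o := fun h => hep (htile ▸ (by simp [h]))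
      have heg : e ≠ g := fun h => hep (htile ▸ (by simp [h]))
      have heu : e ≠ u := fun h => hep (htile ▸ (by simp [h]))
      have hev : e ≠ v := fun h => hep (htile ▸ (by simp [h]))
      constructor
      · intro h; exact Or.inr ⟨h, heg⟩
      · rintro ((rfl | rfl | rfl) | ⟨h, _⟩)
        exacts [absurd rfl heo, absurd rfl heu, absurd rfl hev, h]
  have habig : a ∈ gVerts p (m :: ms) := by
    rw [hbigV]
    exact Finset.mem_union_left _ (by rw [hverts]; simp)
  have hbbig : b ∈ gVerts p (m :: ms) := by
    rw [hbigV]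
    exact Finset.mem_union_left _ (by rw [hverts]; simp)
  have hcbig : c ∈ gVerts p (m :: ms) := by
    rw [hbigV]
    exact Finset.mem_union_left _ (by rw [hverts]; simp)
  have hdbig : d ∈ gVerts p (m :: ms) := by
    rw [hbigV]
    exact Finset.mem_union_left _ (by rw [hverts]; simp)
  have hsubV : gVerts (mv p m) ms ⊆ gVerts p (m :: ms) := by
    rw [hbigV]; exact Finset.subset_union_right
  have houtile : o ∈ tileEdges p := htile ▸ (by simp)
  have hutile : u ∈ tileEdges p := htile ▸ (by simp)
  have hvtile : v ∈ tileEdges p := htile ▸ (by simp)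
  have hedge_a : ∀ e ∈ gEdges p (m :: ms), a ∈ e → e = o ∨ e = u := by
    intro e he hae
    rw [hbigE] at he
    rcases Finset.mem_union.mp he with he | he
    · rw [htile] at he
      simp only [Finset.mem_insert, Finset.mem_singleton] at he
      rcases he with rfl | rfl | rfl | rfl
      exacts [Or.inl rfl, absurd hae hag, Or.inr rfl, absurd hae hav]
    · exact absurd (edge_vert_mem he hae) hanot
  have hedge_c : ∀ e ∈ gEdges p (m :: ms), c ∈ e → e = o ∨ e = v := by
    intro e he hce
    rw [hbigE] at he
    rcases Finset.mem_union.mp he with he | he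
    · rw [htile] at he
      simp only [Finset.mem_insert, Finset.mem_singleton] at he
      rcases he with rfl | rfl | rfl | rfl
      exacts [Or.inl rfl, absurd hce hcg, absurd hce hcu, Or.inr rfl]
    · exact absurd (edge_vert_mem he hce) hcnot
  -- the bijection
  set Ψ : Finset Edge → Finset Edge :=
    fun P => if g ∈ P then insert u (insert v (P.erase g)) else insert o P with hΨ
  -- H1: forward, case g ∈ P
  have H1 : ∀ P, P ∈ BPM (mv p m) ms → g ∈ P →
      insert u (insert v (P.erase g)) ∈ BPM p (m :: ms) := by
    rintro P ⟨⟨hPsub, hPpm⟩, hPbd⟩ hgP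
    refine ⟨⟨?_, ?_⟩, ?_⟩
    · intro e he
      rw [hbigE]
      rcases Finset.mem_insert.mp he with rfl | he
      · exact Finset.mem_union_left _ hutile
      rcases Finset.mem_insert.mp he with rfl | he
      · exact Finset.mem_union_left _ hvtile
      · exact Finset.mem_union_right _ (hPsub (Finset.mem_erase.mp he).2)
    · intro w hw
      by_cases hw' : w ∈ gVerts (mv p m) ms
      · obtain ⟨e₀, ⟨he₀P, he₀w⟩, he₀u⟩ := hPpm w hw'
        by_cases hwb : w = b
        · subst hwb
          refine ⟨u, ⟨Finset.mem_insert_self _ _, hbu⟩, ?_⟩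
          rintro f ⟨hf, hwf⟩
          rcases Finset.mem_insert.mp hf with rfl | hf
          · rfl
          rcases Finset.mem_insert.mp hf with rfl | hf
          · exact absurd hwf hbv
          · obtain ⟨hfg, hfP⟩ := Finset.mem_erase.mp hf
            have h1 := he₀u f ⟨hfP, hwf⟩
            have h2 := he₀u g ⟨hgP, hbg⟩
            exact absurd (h1.trans h2.symm) hfg
        by_cases hwd : w = d
        · subst hwd
          refine ⟨v, ⟨Finset.mem_insert_of_mem (Finset.mem_insert_self _ _), hdv⟩, ?_⟩
          rintro f ⟨hf, hwf⟩
          rcases Finset.mem_insert.mp hf with rfl | hf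
          · exact absurd hwf hdu
          rcases Finset.mem_insert.mp hf with rfl | hf
          · rfl
          · obtain ⟨hfg, hfP⟩ := Finset.mem_erase.mp hf
            have h1 := he₀u f ⟨hfP, hwf⟩
            have h2 := he₀u g ⟨hgP, hdg⟩
            exact absurd (h1.trans h2.symm) hfg
        · have he₀g : e₀ ≠ g := by
            rintro rfl
            rcases hmg w he₀w with h | h
            exacts [hwb h, hwd h]
          refine ⟨e₀, ⟨Finset.mem_insert_of_mem (Finset.mem_insert_of_mem
            (Finset.mem_erase.mpr ⟨he₀g, he₀P⟩)), he₀w⟩, ?_⟩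
          rintro f ⟨hf, hwf⟩
          rcases Finset.mem_insert.mp hf with rfl | hf
          · rcases hmu w hwf with rfl | rfl
            exacts [absurd hw' hanot, absurd rfl hwb]
          rcases Finset.mem_insert.mp hf with rfl | hf
          · rcases hmv w hwf with rfl | rfl
            exacts [absurd hw' hcnot, absurd rfl hwd]
          · exact he₀u f ⟨(Finset.mem_erase.mp hf).2, hwf⟩
      · rw [hbigV] at hw
        have hwt : w ∈ tileVerts p := (Finset.mem_union.mp hw).resolve_right hw'
        rw [hverts] at hwt
        simp only [Finset.mem_insert, Finset.mem_singleton] at hwt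
        rcases hwt with rfl | rfl | rfl | rfl
        · refine ⟨u, ⟨Finset.mem_insert_self _ _, hau⟩, ?_⟩
          rintro f ⟨hf, hwf⟩
          rcases Finset.mem_insert.mp hf with rfl | hf
          · rfl
          rcases Finset.mem_insert.mp hf with rfl | hf
          · exact absurd hwf hav
          · exact absurd (edge_vert_mem (hPsub (Finset.mem_erase.mp hf).2) hwf) hw'
        · exact absurd hbsub hw'
        · refine ⟨v, ⟨Finset.mem_insert_of_mem (Finset.mem_insert_self _ _), hcv⟩, ?_⟩
          rintro f ⟨hf, hwf⟩
          rcases Finset.mem_insert.mp hf with rfl | hf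
          · exact absurd hwf hcu
          rcases Finset.mem_insert.mp hf with rfl | hf
          · rfl
          · exact absurd (edge_vert_mem (hPsub (Finset.mem_erase.mp hf).2) hwf) hw'
        · exact absurd hdsub hw'
    · intro e he
      rw [hbig_bdry]
      rcases Finset.mem_insert.mp he with rfl | he
      · exact Or.inl (Or.inr (Or.inl rfl))
      rcases Finset.mem_insert.mp he with rfl | he
      · exact Or.inl (Or.inr (Or.inr rfl))
      · obtain ⟨hfg, hfP⟩ := Finset.mem_erase.mp he
        exact Or.inr ⟨hPbd e hfP, hfg⟩
  -- H2: forward, case g ∉ P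
  have H2 : ∀ P, P ∈ BPM (mv p m) ms → g ∉ P → insert o P ∈ BPM p (m :: ms) := by
    rintro P ⟨⟨hPsub, hPpm⟩, hPbd⟩ hgP
    refine ⟨⟨?_, ?_⟩, ?_⟩
    · intro e he
      rw [hbigE]
      rcases Finset.mem_insert.mp he with rfl | he
      · exact Finset.mem_union_left _ houtile
      · exact Finset.mem_union_right _ (hPsub he)
    · intro w hw
      by_cases hw' : w ∈ gVerts (mv p m) ms
      · obtain ⟨e₀, ⟨he₀P, he₀w⟩, he₀u⟩ := hPpm w hw'
        refine ⟨e₀, ⟨Finset.mem_insert_of_mem he₀P, he₀w⟩, ?_⟩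
        rintro f ⟨hf, hwf⟩
        rcases Finset.mem_insert.mp hf with rfl | hf
        · rcases hmo w hwf with rfl | rfl
          exacts [absurd hw' hanot, absurd hw' hcnot]
        · exact he₀u f ⟨hf, hwf⟩
      · rw [hbigV] at hw
        have hwt : w ∈ tileVerts p := (Finset.mem_union.mp hw).resolve_right hw'
        rw [hverts] at hwt
        simp only [Finset.mem_insert, Finset.mem_singleton] at hwt
        rcases hwt with rfl | rfl | rfl | rfl
        · refine ⟨o, ⟨Finset.mem_insert_self _ _, hao⟩, ?_⟩
          rintro f ⟨hf, hwf⟩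
          rcases Finset.mem_insert.mp hf with rfl | hf
          · rfl
          · exact absurd (edge_vert_mem (hPsub hf) hwf) hw'
        · exact absurd hbsub hw'
        · refine ⟨o, ⟨Finset.mem_insert_self _ _, hco⟩, ?_⟩
          rintro f ⟨hf, hwf⟩
          rcases Finset.mem_insert.mp hf with rfl | hf
          · rfl
          · exact absurd (edge_vert_mem (hPsub hf) hwf) hw'
        · exact absurd hdsub hw'
    · intro e he
      rw [hbig_bdry]
      rcases Finset.mem_insert.mp he with rfl | he
      · exact Or.inl (Or.inl rfl)
      · exact Or.inr ⟨hPbd e he, fun h => hgP (h ▸ he)⟩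
  -- H0: g is not in any big boundary matching
  have H0 : ∀ Q, Q ∈ BPM p (m :: ms) → g ∉ Q := by
    rintro Q ⟨_, hQbd⟩ hgQ
    rcases (hbig_bdry g).mp (hQbd g hgQ) with (h | h | h) | ⟨_, hne⟩
    exacts [hog h.symm, hug h.symm, hvg h.symm, hne rfl]
  -- H3: backward, case o ∈ Q
  have H3 : ∀ Q, Q ∈ BPM p (m :: ms) → o ∈ Q →
      Q.erase o ∈ BPM (mv p m) ms ∧ g ∉ Q.erase o := by
    rintro Q hQ hoQ
    obtain ⟨⟨hQsub, hQpm⟩, hQbd⟩ := hQ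
    have hgQ : g ∉ Q := H0 Q ⟨⟨hQsub, hQpm⟩, hQbd⟩
    have hbdry' : ∀ e ∈ Q, e ≠ o → gBdry (mv p m) ms e := by
      intro e he hne
      rcases (hbig_bdry e).mp (hQbd e he) with (h | h | h) | ⟨h, _⟩
      · exact absurd h hne
      · obtain ⟨e₀, _, he₀u⟩ := hQpm a habig
        have h1 := he₀u u ⟨h ▸ he, hau⟩
        have h2 := he₀u o ⟨hoQ, hao⟩
        exact absurd (h1.trans h2.symm) hou.symm
      · obtain ⟨e₀, _, he₀u⟩ := hQpm c hcbig
        have h1 := he₀u v ⟨h ▸ he, hcv⟩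
        have h2 := he₀u o ⟨hoQ, hco⟩
        exact absurd (h1.trans h2.symm) hov.symm
      · exact h
    refine ⟨⟨⟨?_, ?_⟩, ?_⟩, fun h => hgQ (Finset.mem_erase.mp h).2⟩
    · intro e he
      obtain ⟨hne, heQ⟩ := Finset.mem_erase.mp he
      exact gBdry_mem_gEdges (hbdry' e heQ hne)
    · intro w hw
      obtain ⟨e₀, ⟨he₀Q, he₀w⟩, he₀u⟩ := hQpm w (hsubV hw)
      have he₀o : e₀ ≠ o := by
        rintro rfl
        rcases hmo w he₀w with rfl | rfl
        exacts [absurd hw hanot, absurd hw hcnot]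
      refine ⟨e₀, ⟨Finset.mem_erase.mpr ⟨he₀o, he₀Q⟩, he₀w⟩, ?_⟩
      rintro f ⟨hf, hwf⟩
      exact he₀u f ⟨(Finset.mem_erase.mp hf).2, hwf⟩
    · intro e he
      obtain ⟨hne, heQ⟩ := Finset.mem_erase.mp he
      exact hbdry' e heQ hne
  -- H4: backward, case o ∉ Q
  have H4 : ∀ Q, Q ∈ BPM p (m :: ms) → o ∉ Q →
      u ∈ Q ∧ v ∈ Q ∧ insert g ((Q.erase u).erase v) ∈ BPM (mv p m) ms := by
    rintro Q hQ hoQ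
    obtain ⟨⟨hQsub, hQpm⟩, hQbd⟩ := hQ
    have hgQ : g ∉ Q := H0 Q ⟨⟨hQsub, hQpm⟩, hQbd⟩
    have huQ : u ∈ Q := by
      obtain ⟨e₀, ⟨he₀Q, he₀a⟩, _⟩ := hQpm a habig
      rcases hedge_a e₀ (hQsub he₀Q) he₀a with rfl | rfl
      exacts [absurd he₀Q hoQ, he₀Q]
    have hvQ : v ∈ Q := by
      obtain ⟨e₀, ⟨he₀Q, he₀c⟩, _⟩ := hQpm c hcbig
      rcases hedge_c e₀ (hQsub he₀Q) he₀c with rfl | rfl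
      exacts [absurd he₀Q hoQ, he₀Q]
    have hbdry' : ∀ e ∈ Q, e ≠ u → e ≠ v → gBdry (mv p m) ms e := by
      intro e he hneu hnev
      rcases (hbig_bdry e).mp (hQbd e he) with (rfl | rfl | rfl) | ⟨h, _⟩
      exacts [absurd he hoQ, absurd rfl hneu, absurd rfl hnev, h]
    refine ⟨huQ, hvQ, ⟨⟨?_, ?_⟩, ?_⟩⟩
    · intro e he
      rcases Finset.mem_insert.mp he with rfl | he
      · exact hgE
      · obtain ⟨hnev, he⟩ := Finset.mem_erase.mp he
        obtain ⟨hneu, heQ⟩ := Finset.mem_erase.mp he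
        exact gBdry_mem_gEdges (hbdry' e heQ hneu hnev)
    · intro w hw
      by_cases hwb : w = b
      · subst hwb
        refine ⟨g, ⟨Finset.mem_insert_self _ _, hbg⟩, ?_⟩
        rintro f ⟨hf, hwf⟩
        rcases Finset.mem_insert.mp hf with rfl | hf
        · rfl
        · obtain ⟨hnev, hf⟩ := Finset.mem_erase.mp hf
          obtain ⟨hneu, hfQ⟩ := Finset.mem_erase.mp hf
          obtain ⟨e₀, _, he₀u⟩ := hQpm w hbbig
          have h1 := he₀u f ⟨hfQ, hwf⟩
          have h2 := he₀u u ⟨huQ, hbu⟩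
          exact absurd (h1.trans h2.symm) hneu
      by_cases hwd : w = d
      · subst hwd
        refine ⟨g, ⟨Finset.mem_insert_self _ _, hdg⟩, ?_⟩
        rintro f ⟨hf, hwf⟩
        rcases Finset.mem_insert.mp hf with rfl | hf
        · rfl
        · obtain ⟨hnev, hf⟩ := Finset.mem_erase.mp hf
          obtain ⟨hneu, hfQ⟩ := Finset.mem_erase.mp hf
          obtain ⟨e₀, _, he₀u⟩ := hQpm w hdbig
          have h1 := he₀u f ⟨hfQ, hwf⟩
          have h2 := he₀u v ⟨hvQ, hdv⟩
          exact absurd (h1.trans h2.symm) hnev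
      · obtain ⟨e₀, ⟨he₀Q, he₀w⟩, he₀u⟩ := hQpm w (hsubV hw)
        have he₀nu : e₀ ≠ u := by
          rintro rfl
          rcases hmu w he₀w with rfl | rfl
          exacts [absurd hw hanot, absurd rfl hwb]
        have he₀nv : e₀ ≠ v := by
          rintro rfl
          rcases hmv w he₀w with rfl | rfl
          exacts [absurd hw hcnot, absurd rfl hwd]
        refine ⟨e₀, ⟨Finset.mem_insert_of_mem (Finset.mem_erase.mpr ⟨he₀nv,
          Finset.mem_erase.mpr ⟨he₀nu, he₀Q⟩⟩), he₀w⟩, ?_⟩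
        rintro f ⟨hf, hwf⟩
        rcases Finset.mem_insert.mp hf with rfl | hf
        · rcases hmg w hwf with rfl | rfl
          exacts [absurd rfl hwb, absurd rfl hwd]
        · exact he₀u f ⟨(Finset.mem_erase.mp (Finset.mem_erase.mp hf).2).2, hwf⟩
    · intro e he
      rcases Finset.mem_insert.mp he with rfl | he
      · exact hgbdry
      · obtain ⟨hnev, hf⟩ := Finset.mem_erase.mp he
        obtain ⟨hneu, hfQ⟩ := Finset.mem_erase.mp hf
        exact hbdry' e hfQ hneu hnev
  -- no o, u, v in sub matchings
  have hnoP : ∀ P, P ∈ BPM (mv p m) ms → o ∉ P ∧ u ∉ P ∧ v ∉ P := by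
    rintro P ⟨⟨hPsub, _⟩, _⟩
    exact ⟨fun h => hsubE_o (hPsub h), fun h => hsubE_u (hPsub h),
      fun h => hsubE_v (hPsub h)⟩
  -- image equality
  have himg : BPM p (m :: ms) = Ψ '' BPM (mv p m) ms := by
    ext Q
    constructor
    · intro hQ
      by_cases hoQ : o ∈ Q
      · obtain ⟨hP, hgP⟩ := H3 Q hQ hoQ
        refine ⟨Q.erase o, hP, ?_⟩
        rw [hΨ]
        simp only [if_neg hgP]
        exact Finset.insert_erase hoQ
      · obtain ⟨huQ, hvQ, hP⟩ := H4 Q hQ hoQ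
        have hgQ : g ∉ Q := H0 Q hQ
        refine ⟨insert g ((Q.erase u).erase v), hP, ?_⟩
        rw [hΨ]
        simp only [if_pos (Finset.mem_insert_self g _)]
        rw [Finset.erase_insert (by
          intro h
          exact hgQ (Finset.mem_erase.mp (Finset.mem_erase.mp h).2).2)]
        rw [Finset.insert_erase (Finset.mem_erase.mpr ⟨huv.symm, hvQ⟩),
          Finset.insert_erase huQ]
    · rintro ⟨P, hP, rfl⟩
      rw [hΨ]
      by_cases hgP : g ∈ P
      · simp only [if_pos hgP]
        exact H1 P hP hgP
      · simp only [if_neg hgP]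
        exact H2 P hP hgP
  -- injectivity
  have hinj : Set.InjOn Ψ (BPM (mv p m) ms) := by
    intro P₁ h₁ P₂ h₂ heq
    obtain ⟨ho₁, hu₁, hv₁⟩ := hnoP P₁ h₁
    obtain ⟨ho₂, hu₂, hv₂⟩ := hnoP P₂ h₂
    rw [hΨ] at heq
    simp only at heq
    by_cases hg₁ : g ∈ P₁ <;> by_cases hg₂ : g ∈ P₂
    · rw [if_pos hg₁, if_pos hg₂] at heq
      have h1 : P₁.erase g = P₂.erase g := by
        have e1 : ∀ P : Finset Edge, u ∉ P → v ∉ P →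
            ((insert u (insert v (P.erase g))).erase u).erase v = P.erase g := by
          intro P hu hv
          rw [Finset.erase_insert (by
            intro h
            rcases Finset.mem_insert.mp h with h | h
            exacts [huv h, hu (Finset.mem_erase.mp h).2])]
          rw [Finset.erase_insert (fun h => hv (Finset.mem_erase.mp h).2)]
        rw [← e1 P₁ hu₁ hv₁, ← e1 P₂ hu₂ hv₂, heq]
      rw [← Finset.insert_erase hg₁, ← Finset.insert_erase hg₂, h1]
    · rw [if_pos hg₁, if_neg hg₂] at heq
      exfalso
      have : u ∈ insert o P₂ := heq ▸ Finset.mem_insert_self u _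
      rcases Finset.mem_insert.mp this with h | h
      exacts [hou h.symm, hu₂ h]
    · rw [if_neg hg₁, if_pos hg₂] at heq
      exfalso
      have : u ∈ insert o P₁ := heq ▸ Finset.mem_insert_self u _
      rcases Finset.mem_insert.mp this with h | h
      exacts [hou h.symm, hu₁ h]
    · rw [if_neg hg₁, if_neg hg₂] at heq
      have e1 : ∀ P : Finset Edge, o ∉ P → (insert o P).erase o = P := fun P h =>
        Finset.erase_insert h
      rw [← e1 P₁ ho₁, ← e1 P₂ ho₂, heq]
  rw [himg, Set.ncard_image_of_injOn hinj]

end Snake18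

namespace Snake18

lemma BPM_card (ms : List Bool) : ∀ p : Vtx, (BPM p ms).ncard = 2 := by
  induction ms with
  | nil =>
    intro p
    rw [BPM_nil]
    exact Set.ncard_pair (pair_ne p)
  | cons m ms ih =>
    intro p
    have key : (BPM p (m :: ms)).ncard = (BPM (mv p m) ms).ncard := by
      cases m
      · -- new tile on top: o = S, g = N, u = W, v = E
        refine step_aux p false ms p (p.1, p.2 + 1) (p.1 + 1, p.2) (p.1 + 1, p.2 + 1)
          (eS p) (eN p) (eW p) (eE p) rfl rfl rfl rfl
          (by intro h; rw [Prod.ext_iff] at h; omega)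
          (by intro h; rw [Prod.ext_iff] at h; omega)
          (by intro h; rw [Prod.ext_iff] at h; omega)
          (by intro h; rw [Prod.ext_iff] at h; omega)
          (by intro h; rw [Prod.ext_iff] at h; omega)
          (by intro h; rw [Prod.ext_iff] at h; omega)
          (by ext e; simp [tileEdges]; tauto)
          (by ext w; simp [tileVerts]; tauto)
          (not_mem_gVerts_of_wt (by rw [wt_mv]; omega))
          ?_ ?_ ?_ ?_ ?_ ?_ ?_
        · intro h
          rcases mem_gVerts_cases h with h | h
          · simp only [mv, if_neg Bool.false_ne_true, tileVerts, Finset.mem_insert,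
              Finset.mem_singleton, Prod.ext_iff] at h
            omega
          · rw [wt_mv] at h; simp only [wt] at h; omega
        · show eN p ∈ tileEdges (mv p false)
          simp [mv, tileEdges, eN, eS]
        · intro q hq
          exact not_mem_tileEdges_of_lt (mem_eS p)
            (by have := mem_gpos_wt hq; rw [wt_mv] at this; omega)
        · intro q hq
          exact not_mem_tileEdges_of_lt (mem_eW p)
            (by have := mem_gpos_wt hq; rw [wt_mv] at this; omega)
        · intro q hq hmem
          rcases mem_gpos_cases hq with rfl | hlt
          · have := tileEdge_verts hmem (p.1 + 1, p.2) (by simp [eE])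
            simp only [mv, if_neg Bool.false_ne_true, tileVerts, Finset.mem_insert,
              Finset.mem_singleton, Prod.ext_iff] at this
            omega
          · exact not_mem_tileEdges_of_lt (v := (p.1 + 1, p.2)) (by simp [eE])
              (by rw [wt_mv] at hlt; simp only [wt] at hlt ⊢; omega) hmem
        · intro q hq hmem
          rcases mem_gpos_cases hq with rfl | hlt
          · rfl
          · exact absurd hmem (not_mem_tileEdges_of_lt (v := (p.1, p.2 + 1)) (by simp [eN])
              (by rw [wt_mv] at hlt; simp only [wt] at hlt ⊢; omega))
        · intro h
          have := mem_gpos_wt h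
          rw [wt_mv] at this
          omega
      · -- new tile to the right: o = W, g = E, u = S, v = N
        refine step_aux p true ms p (p.1 + 1, p.2) (p.1, p.2 + 1) (p.1 + 1, p.2 + 1)
          (eW p) (eE p) (eS p) (eN p) rfl rfl rfl rfl
          (by intro h; rw [Prod.ext_iff] at h; omega)
          (by intro h; rw [Prod.ext_iff] at h; omega)
          (by intro h; rw [Prod.ext_iff] at h; omega)
          (by intro h; rw [Prod.ext_iff] at h; omega)
          (by intro h; rw [Prod.ext_iff] at h; omega)
          (by intro h; rw [Prod.ext_iff] at h; omega)
          (by ext e; simp [tileEdges]; tauto)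
          rfl
          (not_mem_gVerts_of_wt (by rw [wt_mv]; omega))
          ?_ ?_ ?_ ?_ ?_ ?_ ?_
        · intro h
          rcases mem_gVerts_cases h with h | h
          · simp only [mv, reduceIte, tileVerts, Finset.mem_insert,
              Finset.mem_singleton, Prod.ext_iff] at h
            omega
          · rw [wt_mv] at h; simp only [wt] at h; omega
        · show eE p ∈ tileEdges (mv p true)
          simp [mv, tileEdges, eE, eW]
        · intro q hq
          exact not_mem_tileEdges_of_lt (mem_eW p)
            (by have := mem_gpos_wt hq; rw [wt_mv] at this; omega)
        · intro q hq
          exact not_mem_tileEdges_of_lt (mem_eS p)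
            (by have := mem_gpos_wt hq; rw [wt_mv] at this; omega)
        · intro q hq hmem
          rcases mem_gpos_cases hq with rfl | hlt
          · have := tileEdge_verts hmem (p.1, p.2 + 1) (by simp [eN])
            simp only [mv, reduceIte, tileVerts, Finset.mem_insert,
              Finset.mem_singleton, Prod.ext_iff] at this
            omega
          · exact not_mem_tileEdges_of_lt (v := (p.1, p.2 + 1)) (by simp [eN])
              (by rw [wt_mv] at hlt; simp only [wt] at hlt ⊢; omega) hmem
        · intro q hq hmem
          rcases mem_gpos_cases hq with rfl | hlt
          · rfl
          · exact absurd hmem (not_mem_tileEdges_of_lt (v := (p.1 + 1, p.2)) (by simp [eE])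
              (by rw [wt_mv] at hlt; simp only [wt] at hlt ⊢; omega))
        · intro h
          have := mem_gpos_wt h
          rw [wt_mv] at this
          omega
    rw [key]
    exact ih (mv p m)

end Snake18


/-- a snake graph has exactly two perfect matchings consisting entirely of
boundary edges. -/
theorem statement18 (ms : List Bool) :
    {P : Finset Edge | IsPerfectMatching ms P ∧ ∀ e ∈ P, IsBoundaryEdge ms e}.ncard = 2 := by
  have h : {P : Finset Edge | IsPerfectMatching ms P ∧ ∀ e ∈ P, IsBoundaryEdge ms e}
      = Snake18.BPM (0, 0) ms := rfl
  rw [h]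
  exact Snake18.BPM_card ms (0, 0)
end
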